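/- arXiv:2103.08847 — 7 statements merged into one kernel-verified Lean document; each statement's English description precedes it below -/
import Mathlib

section
/- For every measurable function f : (0,∞) → ℝ and every s ∈ (0,1], with (C*|f|)(s) = ∫_s^∞ |f(u)|/u du, one has ∫_0^1 (C*|f|)(s) ds ≤ 2 ∫_0^∞ μ(u,f)/(1+u) du, where both sides take values in [0,∞]. (Consequently the dual Cesàro operator C* maps the Lorentz space Λ_log(0,∞) = {f : ∫_0^∞ μ(u,f)/(1+u) du < ∞} boundedly into (L₁+L∞)(0,∞).) -/
open MeasureTheory ENNReal Set

/-- The decreasing rearrangement `μ(t, f)` of a measurable function `f` with respect to a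
measure `ν`: `μ(t,f) = inf {s ≥ 0 : ν({|f| > s}) ≤ t}`, with values in `[0,∞]`
(the infimum of the empty set being `∞`). -/
noncomputable def mu {X : Type*} [MeasurableSpace X] (ν : Measure X) (f : X → ℝ) (t : ℝ) : ℝ≥0∞ :=
  sInf (ENNReal.ofReal '' {s : ℝ | 0 ≤ s ∧ ν {u | s < |f u|} ≤ ENNReal.ofReal t})


lemma mu_antitone {X : Type*} [MeasurableSpace X] (ν : Measure X) (f : X → ℝ) :
    Antitone (mu ν f) := fun a b hab =>
  sInf_le_sInf (image_mono fun s hs => ⟨hs.1, hs.2.trans (ofReal_le_ofReal hab)⟩)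


noncomputable def wfun (u : ℝ) : ℝ≥0∞ := min 1 (ENNReal.ofReal u)⁻¹

lemma wfun_antitone : Antitone wfun := fun _ _ hab =>
  min_le_min le_rfl (ENNReal.inv_le_inv.mpr (ofReal_le_ofReal hab))

lemma wfun_measurable : Measurable wfun := wfun_antitone.measurable


lemma wfun_bound {v : ℝ} (hv : 0 < v) : wfun v ≤ 2 * (ENNReal.ofReal (1 + v))⁻¹ := by
  rcases le_or_gt v 1 with h | h
  · refine (min_le_left _ _).trans ?_
    have h2 : ENNReal.ofReal (1 + v) ≤ 2 := by
      rw [show (2 : ℝ≥0∞) = ENNReal.ofReal 2 by norm_num]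
      exact ofReal_le_ofReal (by linarith)
    have := ENNReal.inv_le_inv.mpr h2
    calc (1 : ℝ≥0∞) = 2 * 2⁻¹ := by
          rw [ENNReal.mul_inv_cancel (by norm_num) (by norm_num)]
      _ ≤ 2 * (ENNReal.ofReal (1 + v))⁻¹ := mul_le_mul_right this 2
  · refine (min_le_right _ _).trans ?_
    have h2 : ENNReal.ofReal (1 + v) ≤ 2 * ENNReal.ofReal v := by
      rw [show (2 : ℝ≥0∞) = ENNReal.ofReal 2 by norm_num, ← ENNReal.ofReal_mul (by norm_num)]
      exact ofReal_le_ofReal (by linarith)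
    have h3 : (2 * ENNReal.ofReal v)⁻¹ ≤ (ENNReal.ofReal (1 + v))⁻¹ :=
      ENNReal.inv_le_inv.mpr h2
    have h4 : (2 * ENNReal.ofReal v)⁻¹ = 2⁻¹ * (ENNReal.ofReal v)⁻¹ :=
      ENNReal.mul_inv (Or.inl (by norm_num)) (Or.inl (by norm_num))
    calc (ENNReal.ofReal v)⁻¹ = 2 * (2⁻¹ * (ENNReal.ofReal v)⁻¹) := by
          rw [← mul_assoc, ENNReal.mul_inv_cancel (by norm_num) (by norm_num), one_mul]
      _ = 2 * (2 * ENNReal.ofReal v)⁻¹ := by rw [h4]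
      _ ≤ 2 * (ENNReal.ofReal (1 + v))⁻¹ := mul_le_mul_right h3 2


lemma key_decr (w : ℝ → ℝ≥0∞) (hw : Antitone w) {A : Set ℝ} (hA : MeasurableSet A)
    (hA0 : A ⊆ Ioi 0) :
    ∫⁻ u in A, w u ≤ ∫⁻ u in {v : ℝ | 0 < v ∧ ENNReal.ofReal v < volume A}, w u := by
  rcases eq_or_ne (volume A) ∞ with htop | hfin
  · have hset : {v : ℝ | 0 < v ∧ ENNReal.ofReal v < volume A} = Ioi 0 := by
      ext v; simp [htop, ofReal_lt_top, mem_Ioi]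
    rw [hset]
    exact lintegral_mono_set hA0
  · set T := (volume A).toReal with hT
    have hT0 : 0 ≤ T := toReal_nonneg
    have hvol : volume A = ENNReal.ofReal T := (ofReal_toReal hfin).symm
    have hset : {v : ℝ | 0 < v ∧ ENNReal.ofReal v < volume A} = Ioo 0 T := by
      ext v
      simp only [mem_setOf_eq, mem_Ioo, hvol]
      exact and_congr_right fun hv => ofReal_lt_ofReal_iff_of_nonneg hv.le
    rw [hset]
    have hinter : A ∩ Iio T = Ioo 0 T ∩ A := by
      ext u
      constructor
      · rintro ⟨hu, hlt⟩; exact ⟨⟨hA0 hu, hlt⟩, hu⟩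
      · rintro ⟨⟨_, hlt⟩, hu⟩; exact ⟨hu, hlt⟩
    have hmeq : volume (A ∩ Ici T) = volume (Ioo 0 T \ A) := by
      have h1 : volume (A ∩ Iio T) + volume (A ∩ Ici T) = ENNReal.ofReal T := by
        rw [← hvol]
        have := measure_inter_add_diff (μ := volume) A (measurableSet_Iio (a := T))
        rwa [diff_eq, compl_Iio] at this
      have h2 : volume (A ∩ Iio T) + volume (Ioo 0 T \ A) = ENNReal.ofReal T := by
        have := measure_inter_add_diff (μ := volume) (Ioo 0 T) hA
        rw [hinter, this]
        simp [Real.volume_Ioo]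
      have hne : volume (A ∩ Iio T) ≠ ∞ := by
        refine ne_of_lt (lt_of_le_of_lt (measure_mono inter_subset_left) ?_)
        rw [hvol]; exact ofReal_lt_top
      exact (ENNReal.add_right_inj hne).mp (h1.trans h2.symm)
    have hsplit : ∫⁻ u in A, w u = (∫⁻ u in A ∩ Iio T, w u) + ∫⁻ u in A ∩ Ici T, w u := by
      have hU : A = (A ∩ Iio T) ∪ (A ∩ Ici T) := by
        rw [← inter_union_distrib_left, Iio_union_Ici, inter_univ]
      have hdisj : Disjoint (A ∩ Iio T) (A ∩ Ici T) :=
        (Iio_disjoint_Ici le_rfl).mono inter_subset_right inter_subset_right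
      conv_lhs => rw [hU]
      exact lintegral_union (μ := volume) (f := w) (A := A ∩ Iio T) (B := A ∩ Ici T)
        (hA.inter measurableSet_Ici) hdisj
    have hbound : ∫⁻ u in A ∩ Ici T, w u ≤ ∫⁻ u in Ioo 0 T \ A, w u := by
      calc ∫⁻ u in A ∩ Ici T, w u ≤ ∫⁻ _ in A ∩ Ici T, w T := by
            refine setLIntegral_mono' (hA.inter measurableSet_Ici) fun u hu => hw hu.2
        _ = w T * volume (A ∩ Ici T) := setLIntegral_const _ _
        _ = w T * volume (Ioo 0 T \ A) := by rw [hmeq]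
        _ = ∫⁻ _ in Ioo 0 T \ A, w T := (setLIntegral_const _ _).symm
        _ ≤ ∫⁻ u in Ioo 0 T \ A, w u := by
            refine setLIntegral_mono' (measurableSet_Ioo.diff hA) fun u hu => hw hu.1.2.le
    calc ∫⁻ u in A, w u = (∫⁻ u in A ∩ Iio T, w u) + ∫⁻ u in A ∩ Ici T, w u := hsplit
      _ ≤ (∫⁻ u in A ∩ Iio T, w u) + ∫⁻ u in Ioo 0 T \ A, w u := add_le_add_right hbound (∫⁻ u in A ∩ Iio T, w u)
      _ = ∫⁻ u in (A ∩ Iio T) ∪ (Ioo 0 T \ A), w u :=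
          (lintegral_union (μ := volume) (f := w) (A := A ∩ Iio T) (B := Ioo 0 T \ A)
            (measurableSet_Ioo.diff hA)
            (disjoint_sdiff_right.mono_left inter_subset_left)).symm
      _ ≤ ∫⁻ u in Ioo 0 T, w u := by
          refine lintegral_mono_set ?_
          rw [hinter]
          exact union_subset (inter_subset_left) diff_subset


lemma stepA (f : ℝ → ℝ) (hf : Measurable f) :
    (∫⁻ s in Ioc (0:ℝ) 1, ∫⁻ u in Ioi s, ENNReal.ofReal |f u| / ENNReal.ofReal u) =
      ∫⁻ u in Ioi (0:ℝ), ENNReal.ofReal |f u| * wfun u := by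
  set g : ℝ → ℝ≥0∞ := fun u => ENNReal.ofReal |f u| * (ENNReal.ofReal u)⁻¹ with hgdef
  have hg : Measurable g :=
    (ENNReal.measurable_ofReal.comp hf.abs).mul (ENNReal.measurable_ofReal.comp measurable_id).inv
  set F : ℝ × ℝ → ℝ≥0∞ := {q : ℝ × ℝ | q.1 < q.2}.indicator (fun q => g q.2) with hFdef
  have hFmeas : Measurable F :=
    (hg.comp measurable_snd).indicator (measurableSet_lt measurable_fst measurable_snd)
  have hdiv : ∀ s : ℝ, (∫⁻ u in Ioi s, ENNReal.ofReal |f u| / ENNReal.ofReal u) =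
      ∫⁻ u in Ioi s, g u := by
    intro s; exact lintegral_congr fun u => by rw [div_eq_mul_inv]
  calc (∫⁻ s in Ioc (0:ℝ) 1, ∫⁻ u in Ioi s, ENNReal.ofReal |f u| / ENNReal.ofReal u)
      = ∫⁻ s in Ioc (0:ℝ) 1, ∫⁻ u, F (s, u) := by
        refine lintegral_congr fun s => ?_
        rw [hdiv s, ← lintegral_indicator measurableSet_Ioi]
        refine lintegral_congr fun u => ?_
        simp only [hFdef, indicator_apply, mem_setOf_eq, mem_Ioi]
    _ = ∫⁻ u, ∫⁻ s in Ioc (0:ℝ) 1, F (s, u) :=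
        lintegral_lintegral_swap hFmeas.aemeasurable
    _ = ∫⁻ u, g u * ENNReal.ofReal (min u 1) := by
        refine lintegral_congr fun u => ?_
        have h1 : (fun s => F (s, u)) = (Iio u).indicator (fun _ => g u) := by
          funext s
          simp only [hFdef, indicator_apply, mem_setOf_eq, mem_Iio]
        rw [h1, lintegral_indicator measurableSet_Iio, setLIntegral_const,
          Measure.restrict_apply measurableSet_Iio]
        congr 1
        rcases le_or_gt u 1 with h | h
        · have h2 : Iio u ∩ Ioc 0 1 = Ioo 0 u := by
            ext s
            constructor
            · rintro ⟨h1', h2', _⟩; exact ⟨h2', h1'⟩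
            · rintro ⟨h1', h2'⟩; exact ⟨h2', h1', le_of_lt (lt_of_lt_of_le h2' h)⟩
          rw [h2, Real.volume_Ioo, sub_zero, min_eq_left h]
        · have h2 : Iio u ∩ Ioc 0 1 = Ioc 0 1 :=
            inter_eq_self_of_subset_right fun s hs => lt_of_le_of_lt hs.2 h
          rw [h2, Real.volume_Ioc, sub_zero, min_eq_right h.le]
    _ = ∫⁻ u, (Ioi 0).indicator (fun u => ENNReal.ofReal |f u| * wfun u) u := by
        refine lintegral_congr fun u => ?_
        rcases le_or_gt u 0 with h | h
        · have hz : ENNReal.ofReal (min u 1) = 0 :=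
            ofReal_eq_zero.mpr ((min_le_left u 1).trans h)
          rw [hz, mul_zero, indicator_of_notMem (by simpa using not_lt.mpr h)]
        · rw [indicator_of_mem (mem_Ioi.mpr h)]
          show ENNReal.ofReal |f u| * (ENNReal.ofReal u)⁻¹ * ENNReal.ofReal (min u 1) =
            ENNReal.ofReal |f u| * wfun u
          rw [mul_assoc]
          congr 1
          rcases le_or_gt u 1 with h1 | h1
          · rw [min_eq_left h1, ENNReal.inv_mul_cancel (ofReal_pos.mpr h).ne'
              ofReal_ne_top]
            exact (min_eq_left (ENNReal.one_le_inv.mpr (by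
              simpa using ofReal_le_ofReal h1))).symm
          · rw [min_eq_right h1.le]
            simp only [ofReal_one, mul_one, wfun]
            exact (min_eq_right (ENNReal.inv_le_one.mpr (by
              simpa using ofReal_le_ofReal h1.le))).symm
    _ = ∫⁻ u in Ioi (0:ℝ), ENNReal.ofReal |f u| * wfun u := by
        rw [lintegral_indicator measurableSet_Ioi]


/-- For every measurable `f : (0,∞) → ℝ`, with `(C*|f|)(s) = ∫_s^∞ |f(u)|/u du`, one has
`∫_0^1 (C*|f|)(s) ds ≤ 2 ∫_0^∞ μ(u,f)/(1+u) du`. -/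
theorem stmt_0 (f : ℝ → ℝ) (hf : Measurable f) :
    (∫⁻ s in Ioc (0:ℝ) 1, ∫⁻ u in Ioi s, ENNReal.ofReal |f u| / ENNReal.ofReal u) ≤
      2 * ∫⁻ u in Ioi (0:ℝ), mu (volume.restrict (Ioi 0)) f u / ENNReal.ofReal (1 + u) := by
  set ν : Measure ℝ := (volume.restrict (Ioi 0)).withDensity wfun with hνdef
  set D : ℝ → ℝ≥0∞ := fun s => volume ({a : ℝ | s < |f a|} ∩ Ioi 0) with hDdef
  have hAs : ∀ s : ℝ, MeasurableSet {a : ℝ | s < |f a|} := fun s =>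
    measurableSet_lt measurable_const hf.abs
  have hDanti : Antitone D := fun s t hst =>
    measure_mono (inter_subset_inter_left _ fun a ha => lt_of_le_of_lt hst ha)
  have hD : Measurable D := hDanti.measurable
  set G : ℝ × ℝ → ℝ≥0∞ :=
    {p : ℝ × ℝ | 0 < p.2 ∧ ENNReal.ofReal p.2 < D p.1}.indicator (fun p => wfun p.2) with hGdef
  have hGset : MeasurableSet {p : ℝ × ℝ | 0 < p.2 ∧ ENNReal.ofReal p.2 < D p.1} := by
    have h1 : MeasurableSet {p : ℝ × ℝ | 0 < p.2} :=
      measurableSet_lt measurable_const measurable_snd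
    have h2 : MeasurableSet {p : ℝ × ℝ | ENNReal.ofReal p.2 < D p.1} :=
      measurableSet_lt (ENNReal.measurable_ofReal.comp measurable_snd) (hD.comp measurable_fst)
    exact h1.inter h2
  have hGmeas : Measurable G := (wfun_measurable.comp measurable_snd).indicator hGset
  set μf : ℝ → ℝ≥0∞ := mu (volume.restrict (Ioi 0)) f with hμfdef
  have hμfmeas : Measurable μf := (mu_antitone _ _).measurable
  have hMle : ∀ v : ℝ, volume ({s : ℝ | ENNReal.ofReal v < D s} ∩ Ioi 0) ≤ μf v := by
    intro v
    refine le_sInf ?_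
    rintro b ⟨s', ⟨hs'0, hs'⟩, rfl⟩
    have hD' : D s' ≤ ENNReal.ofReal v := by
      rwa [Measure.restrict_apply (hAs s')] at hs'
    have hsub : {s : ℝ | ENNReal.ofReal v < D s} ∩ Ioi 0 ⊆ Ioc 0 s' := by
      rintro s ⟨hs1, hs2⟩
      refine ⟨hs2, ?_⟩
      by_contra hgt
      push_neg at hgt
      exact absurd ((hDanti hgt.le).trans hD') (not_le.mpr hs1)
    calc volume ({s : ℝ | ENNReal.ofReal v < D s} ∩ Ioi 0) ≤ volume (Ioc 0 s') :=
          measure_mono hsub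
      _ = ENNReal.ofReal s' := by rw [Real.volume_Ioc, sub_zero]
  calc (∫⁻ s in Ioc (0:ℝ) 1, ∫⁻ u in Ioi s, ENNReal.ofReal |f u| / ENNReal.ofReal u)
      = ∫⁻ u in Ioi (0:ℝ), ENNReal.ofReal |f u| * wfun u := stepA f hf
    _ = ∫⁻ a, ENNReal.ofReal |f a| ∂ν := by
        have hmg : Measurable fun a : ℝ => ENNReal.ofReal |f a| :=
          ENNReal.measurable_ofReal.comp hf.abs
        have := lintegral_withDensity_eq_lintegral_mul (volume.restrict (Ioi 0))
          wfun_measurable (g := fun a : ℝ => ENNReal.ofReal |f a|) hmg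
        rw [hνdef, this]
        exact lintegral_congr fun u => (mul_comm _ _)
    _ = ∫⁻ s in Ioi (0:ℝ), ν {a : ℝ | s < |f a|} :=
        lintegral_eq_lintegral_meas_lt ν (Filter.Eventually.of_forall fun x => abs_nonneg _)
          hf.abs.aemeasurable
    _ ≤ ∫⁻ s in Ioi (0:ℝ), ∫⁻ v, G (s, v) := by
        refine lintegral_mono fun s => ?_
        rw [hνdef, withDensity_apply _ (hAs s), Measure.restrict_restrict (hAs s)]
        refine (key_decr wfun wfun_antitone ((hAs s).inter measurableSet_Ioi)
          inter_subset_right).trans ?_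
        have hSs : MeasurableSet {v : ℝ | 0 < v ∧ ENNReal.ofReal v < D s} := by
          have h1 : MeasurableSet {v : ℝ | 0 < v} :=
            measurableSet_lt measurable_const measurable_id
          have h2 : MeasurableSet {v : ℝ | ENNReal.ofReal v < D s} :=
            measurableSet_lt ENNReal.measurable_ofReal measurable_const
          exact h1.inter h2
        rw [← lintegral_indicator hSs]
        refine le_of_eq (lintegral_congr fun v => ?_)
        simp only [hGdef, indicator_apply, mem_setOf_eq]
    _ = ∫⁻ v, ∫⁻ s in Ioi (0:ℝ), G (s, v) := lintegral_lintegral_swap hGmeas.aemeasurable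
    _ = ∫⁻ v, (Ioi (0:ℝ)).indicator
          (fun v => wfun v * volume ({s : ℝ | ENNReal.ofReal v < D s} ∩ Ioi 0)) v := by
        refine lintegral_congr fun v => ?_
        rcases le_or_gt v 0 with h | h
        · have : ∀ s, G (s, v) = 0 := fun s => by
            simp [hGdef, indicator_apply, not_lt.mpr h]
          rw [indicator_of_notMem (fun hx => (not_lt.mpr h) (mem_Ioi.mp hx))]
          simp only [this, lintegral_zero]
        · rw [indicator_of_mem (mem_Ioi.mpr h)]
          have h1 : (fun s => G (s, v)) =
              {s : ℝ | ENNReal.ofReal v < D s}.indicator (fun _ => wfun v) := by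
            funext s
            simp only [hGdef, indicator_apply, mem_setOf_eq, h, true_and]
          rw [h1, lintegral_indicator (measurableSet_lt measurable_const hD),
            setLIntegral_const, Measure.restrict_apply (measurableSet_lt measurable_const hD)]
    _ = ∫⁻ v in Ioi (0:ℝ), wfun v * volume ({s : ℝ | ENNReal.ofReal v < D s} ∩ Ioi 0) := by
        rw [lintegral_indicator measurableSet_Ioi]
    _ ≤ ∫⁻ v in Ioi (0:ℝ), 2 * (μf v / ENNReal.ofReal (1 + v)) := by
        refine setLIntegral_mono' measurableSet_Ioi fun v hv => ?_
        rw [div_eq_mul_inv]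
        calc wfun v * volume ({s : ℝ | ENNReal.ofReal v < D s} ∩ Ioi 0)
            ≤ wfun v * μf v := mul_le_mul_right (hMle v) _
          _ ≤ (2 * (ENNReal.ofReal (1 + v))⁻¹) * μf v :=
              mul_le_mul_left (wfun_bound (mem_Ioi.mp hv)) _
          _ = 2 * (μf v * (ENNReal.ofReal (1 + v))⁻¹) := by ring
    _ = 2 * ∫⁻ v in Ioi (0:ℝ), μf v / ENNReal.ofReal (1 + v) := by
        refine lintegral_const_mul 2 ?_
        exact hμfmeas.div (ENNReal.measurable_ofReal.comp (measurable_const.add measurable_id))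
end

section
/- There is an absolute constant c ≥ 1 such that for every sequence a = (a_k)_{k≥0} of real numbers, c⁻¹ ‖a‖_{m_log} ≤ sup_{1<p≤2} (p−1) (∑_{k≥0} |a_k|^p)^{1/p} ≤ c ‖a‖_{m_log}, where both sides take values in [0,∞]. -/
open MeasureTheory ENNReal Set

namespace StmtAux

open Filter Topology

variable {a : ℕ → ℝ}

lemma lt_count_of_lt_mu {j : ℕ} {s : ℝ} (hs : 0 ≤ s)
    (h : ENNReal.ofReal s < mu Measure.count a j) :
    ((j : ℝ≥0∞)) < Measure.count {k | s < |a k|} := by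
  by_contra hc
  push_neg at hc
  have hmem : ENNReal.ofReal s ∈ ENNReal.ofReal ''
      {s : ℝ | 0 ≤ s ∧ Measure.count {u | s < |a u|} ≤ ENNReal.ofReal (j : ℝ)} :=
    ⟨s, ⟨hs, by rwa [ENNReal.ofReal_natCast]⟩, rfl⟩
  exact absurd (sInf_le hmem) h.not_ge

lemma le_mu {j : ℕ} {b : ℝ}
    (h : ∀ s, 0 ≤ s → s < b → (j : ℝ≥0∞) < Measure.count {k | s < |a k|}) :
    ENNReal.ofReal b ≤ mu Measure.count a j := by
  refine le_sInf ?_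
  rintro x ⟨s, ⟨hs0, hsc⟩, rfl⟩
  rw [ENNReal.ofReal_natCast] at hsc
  have hb : ¬ s < b := fun hlt => absurd hsc (h s hs0 hlt).not_ge
  exact ENNReal.ofReal_le_ofReal (not_lt.1 hb)

lemma mu_antitone (a : ℕ → ℝ) : Antitone (mu Measure.count a) := by
  intro t t' h
  refine sInf_le_sInf (image_mono ?_)
  exact fun s hs => ⟨hs.1, hs.2.trans (ENNReal.ofReal_le_ofReal h)⟩

/-- Sum of `|a k|^p` over any finset is at most the sum over the first `F.card`
values of the decreasing rearrangement, to the `p`. -/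
lemma sum_ofReal_le (a : ℕ → ℝ) {p : ℝ} (hp : 0 < p) (n : ℕ) :
    ∀ F : Finset ℕ, F.card = n →
      ∑ k ∈ F, ENNReal.ofReal (|a k| ^ p)
        ≤ ∑ j ∈ Finset.range n, (mu Measure.count a j) ^ p := by
  induction n with
  | zero => intro F hF; rw [Finset.card_eq_zero.1 hF]; simp
  | succ n ih =>
    intro F hF
    have hne : F.Nonempty := Finset.card_pos.1 (hF ▸ n.succ_pos)
    obtain ⟨k₀, hk₀F, hk₀⟩ := F.exists_min_image (fun k => |a k|) hne
    have hmu : ENNReal.ofReal (|a k₀|) ≤ mu Measure.count a n := by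
      refine le_mu fun s hs0 hlt => ?_
      have hsub : (F : Set ℕ) ⊆ {k | s < |a k|} := fun k hk =>
        lt_of_lt_of_le hlt (hk₀ k hk)
      calc (n : ℝ≥0∞) < (F.card : ℝ≥0∞) := by exact_mod_cast (by omega : n < F.card)
        _ = Measure.count (F : Set ℕ) := (Measure.count_apply_finset F).symm
        _ ≤ Measure.count {k | s < |a k|} := measure_mono hsub
    have hterm : ENNReal.ofReal (|a k₀| ^ p) ≤ (mu Measure.count a n) ^ p := by
      rw [← ENNReal.ofReal_rpow_of_nonneg (abs_nonneg _) hp.le]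
      exact ENNReal.rpow_le_rpow hmu hp.le
    have hcard : (F.erase k₀).card = n := by
      rw [Finset.card_erase_of_mem hk₀F, hF]; rfl
    calc ∑ k ∈ F, ENNReal.ofReal (|a k| ^ p)
        = ∑ k ∈ F.erase k₀, ENNReal.ofReal (|a k| ^ p) + ENNReal.ofReal (|a k₀| ^ p) := by
          rw [Finset.sum_erase_add _ _ hk₀F]
      _ ≤ ∑ j ∈ Finset.range n, (mu Measure.count a j) ^ p + (mu Measure.count a n) ^ p :=
          add_le_add (ih _ hcard) hterm
      _ = ∑ j ∈ Finset.range (n+1), (mu Measure.count a j) ^ p :=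
          (Finset.sum_range_succ _ n).symm

lemma tsum_ofReal_le (a : ℕ → ℝ) {p : ℝ} (hp : 0 < p) :
    ∑' k, ENNReal.ofReal (|a k| ^ p) ≤ ∑' j : ℕ, (mu Measure.count a j) ^ p := by
  rw [ENNReal.tsum_eq_iSup_sum]
  exact iSup_le fun F => (sum_ofReal_le a hp F.card F rfl).trans (ENNReal.sum_le_tsum _)

/-- greedy selection -/
lemma exists_finset (a : ℕ → ℝ) {p : ℝ} (hp : 0 < p) :
    ∀ (n : ℕ) (t : ℕ → ℝ), (∀ j, 0 ≤ t j) →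
      (∀ j ≤ n, (j : ℝ≥0∞) < Measure.count {k | t j < |a k|}) →
      ∃ F : Finset ℕ, F.card = n + 1 ∧
        ∑ j ∈ Finset.range (n+1), ENNReal.ofReal (t j) ^ p
          ≤ ∑ k ∈ F, ENNReal.ofReal (|a k| ^ p) := by
  intro n
  induction n with
  | zero =>
    intro t ht0 hc
    have h0 : Measure.count {k | t 0 < |a k|} ≠ 0 := by
      have := hc 0 le_rfl; simpa using this.ne'
    obtain ⟨k, hk⟩ : {k | t 0 < |a k|}.Nonempty := Measure.count_ne_zero_iff.1 h0
    refine ⟨{k}, by simp, ?_⟩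
    rw [Finset.sum_range_succ, Finset.sum_range_zero, zero_add, Finset.sum_singleton]
    rw [← ENNReal.ofReal_rpow_of_nonneg (abs_nonneg _) hp.le]
    exact ENNReal.rpow_le_rpow (ENNReal.ofReal_le_ofReal (le_of_lt hk)) hp.le
  | succ n ih =>
    intro t ht0 hc
    obtain ⟨F, hFcard, hFsum⟩ := ih t ht0 (fun j hj => hc j (hj.trans n.le_succ))
    have hbig := hc (n+1) le_rfl
    obtain ⟨k, hkS, hkF⟩ : ∃ k, t (n+1) < |a k| ∧ k ∉ F := by
      by_contra hcon
      push_neg at hcon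
      have hsub : {k | t (n+1) < |a k|} ⊆ (F : Set ℕ) := fun k hk => hcon k hk
      have := (measure_mono hsub).trans_eq (Measure.count_apply_finset F)
      rw [hFcard] at this
      exact absurd (hbig.trans_le this) (by simp)
    refine ⟨insert k F, by rw [Finset.card_insert_of_notMem hkF, hFcard], ?_⟩
    rw [Finset.sum_insert hkF, Finset.sum_range_succ, add_comm (ENNReal.ofReal (|a k| ^ p))]
    refine add_le_add hFsum ?_
    rw [← ENNReal.ofReal_rpow_of_nonneg (abs_nonneg _) hp.le]
    exact ENNReal.rpow_le_rpow (ENNReal.ofReal_le_ofReal hkS.le) hp.le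

lemma sum_mu_le_core (a : ℕ → ℝ) {p : ℝ} (hp : 0 < p) (n : ℕ)
    (hpos : ∀ j ≤ n, mu Measure.count a j ≠ 0) (hfin : ∀ j ≤ n, mu Measure.count a j ≠ ⊤) :
    ∑ j ∈ Finset.range (n+1), (mu Measure.count a j) ^ p
      ≤ ∑' k, ENNReal.ofReal (|a k| ^ p) := by
  set R := ∑' k, ENNReal.ofReal (|a k| ^ p) with hR
  set A := ∑ j ∈ Finset.range (n+1), (mu Measure.count a j) ^ p with hA
  -- step 1 : bound for each θ ∈ [0,1)
  have key : ∀ θ : ℝ, 0 ≤ θ → θ < 1 → ENNReal.ofReal θ ^ p * A ≤ R := by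
    intro θ hθ0 hθ1
    set t : ℕ → ℝ := fun j => θ * (mu Measure.count a j).toReal with ht
    have ht0 : ∀ j, 0 ≤ t j := fun j => mul_nonneg hθ0 ENNReal.toReal_nonneg
    have htlt : ∀ j ≤ n, ENNReal.ofReal (t j) < mu Measure.count a j := by
      intro j hj
      have : ENNReal.ofReal (t j) = ENNReal.ofReal θ * mu Measure.count a j := by
        rw [ht, ENNReal.ofReal_mul hθ0, ENNReal.ofReal_toReal (hfin j hj)]
      rw [this]
      calc ENNReal.ofReal θ * mu Measure.count a j
          < 1 * mu Measure.count a j := by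
            rw [ENNReal.mul_lt_mul_iff_left (hpos j hj) (hfin j hj)]
            exact lt_of_lt_of_le (ENNReal.ofReal_lt_ofReal_iff_of_nonneg hθ0 |>.2 hθ1)
              (by simp)
        _ = mu Measure.count a j := one_mul _
    have hcnt : ∀ j ≤ n, (j : ℝ≥0∞) < Measure.count {k | t j < |a k|} :=
      fun j hj => lt_count_of_lt_mu (ht0 j) (htlt j hj)
    obtain ⟨F, _, hFsum⟩ := exists_finset a hp n t ht0 hcnt
    have hmain : ∑ j ∈ Finset.range (n+1), ENNReal.ofReal (t j) ^ p ≤ R :=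
      hFsum.trans (ENNReal.sum_le_tsum _)
    calc ENNReal.ofReal θ ^ p * A
        = ∑ j ∈ Finset.range (n+1), ENNReal.ofReal θ ^ p * (mu Measure.count a j) ^ p := by
          rw [hA, Finset.mul_sum]
      _ = ∑ j ∈ Finset.range (n+1), ENNReal.ofReal (t j) ^ p := by
          refine Finset.sum_congr rfl fun j hj => ?_
          rw [← ENNReal.mul_rpow_of_nonneg _ _ hp.le, ht]
          congr 1
          rw [ENNReal.ofReal_mul hθ0, ENNReal.ofReal_toReal (hfin j (Finset.mem_range_succ_iff.1 hj))]
      _ ≤ R := hmain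
  -- step 2 : limit θ → 1
  have hAfin : A ≠ ⊤ := by
    rw [hA]
    refine (ENNReal.sum_lt_top.2 fun j hj => ?_).ne
    exact (ENNReal.rpow_lt_top_of_nonneg hp.le
      (hfin j (Finset.mem_range_succ_iff.1 hj)))
  have htend : Tendsto (fun q : ℕ => ENNReal.ofReal (1 - 1/(q+1) : ℝ) ^ p * A)
      atTop (𝓝 A) := by
    have h1 : Tendsto (fun q : ℕ => (1 - 1/(q+1) : ℝ)) atTop (𝓝 1) := by
      have := tendsto_one_div_add_atTop_nhds_zero_nat (𝕜 := ℝ)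
      have := (tendsto_const_nhds (x := (1:ℝ)) (f := atTop)).sub this
      simpa using this
    have h2 : Tendsto (fun q : ℕ => ENNReal.ofReal ((1 - 1/(q+1) : ℝ) ^ p)) atTop
        (𝓝 (ENNReal.ofReal (1 ^ p))) := by
      refine ENNReal.tendsto_ofReal ?_
      exact (Real.continuousAt_rpow_const _ _ (Or.inl one_ne_zero)).tendsto.comp h1
    have h3 : Tendsto (fun q : ℕ => ENNReal.ofReal ((1 - 1/(q+1) : ℝ) ^ p)) atTop (𝓝 1) := by
      simpa using h2
    have h4 := ENNReal.Tendsto.mul_const h3 (Or.inr hAfin)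
    rw [one_mul] at h4
    convert h4 using 2 with q
    have hq : (0:ℝ) ≤ 1 - 1/(q+1) := by
      have h5 : 1/((q:ℝ)+1) ≤ 1 := by
        rw [div_le_one (by positivity)]
        linarith [Nat.cast_nonneg (α := ℝ) q]
      linarith
    rw [ENNReal.ofReal_rpow_of_nonneg hq hp.le]
  refine le_of_tendsto' htend fun q => ?_
  refine key _ ?_ ?_
  · have : 1/((q:ℝ)+1) ≤ 1 := by
      rw [div_le_one (by positivity)]; linarith [Nat.cast_nonneg (α := ℝ) q]
    linarith
  · have : 0 < 1/((q:ℝ)+1) := by positivity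
    linarith

lemma tsum_eq_top_of_mu_eq_top {j : ℕ} {p : ℝ} (hp : 1 ≤ p)
    (h : mu Measure.count a j = ⊤) : ∑' k, ENNReal.ofReal (|a k| ^ p) = ⊤ := by
  have hbig : ∀ s : ℝ, 0 ≤ s → ∃ k, s < |a k| := by
    intro s hs
    by_contra hcon
    push_neg at hcon
    have hempty : {k | s < |a k|} = ∅ := eq_empty_of_forall_notMem fun k hk =>
      absurd hk (not_lt.2 (hcon k))
    have hmem : ENNReal.ofReal s ∈ ENNReal.ofReal ''
        {s : ℝ | 0 ≤ s ∧ Measure.count {u | s < |a u|} ≤ ENNReal.ofReal (j : ℝ)} :=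
      ⟨s, ⟨hs, by rw [hempty]; simp⟩, rfl⟩
    have := sInf_eq_top.1 h _ hmem
    exact ENNReal.ofReal_ne_top this
  rw [eq_top_iff, ← ENNReal.iSup_natCast]
  refine iSup_le fun q => ?_
  obtain ⟨k, hk⟩ := hbig q (Nat.cast_nonneg q)
  refine le_trans ?_ (ENNReal.le_tsum k)
  have h1 : ((q:ℝ)) ≤ |a k| ^ p := by
    rcases Nat.eq_zero_or_pos q with hq | hq
    · subst hq; simp; positivity
    · have hq1 : (1:ℝ) ≤ (q:ℝ) := by exact_mod_cast hq
      calc ((q:ℝ)) = (q:ℝ) ^ (1:ℝ) := (Real.rpow_one _).symm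
        _ ≤ (q:ℝ) ^ p := Real.rpow_le_rpow_of_exponent_le hq1 hp
        _ ≤ |a k| ^ p := Real.rpow_le_rpow (Nat.cast_nonneg q) hk.le
            (le_trans zero_le_one hp)
  calc ((q:ℕ):ℝ≥0∞) = ENNReal.ofReal (q:ℝ) := (ENNReal.ofReal_natCast q).symm
    _ ≤ ENNReal.ofReal (|a k| ^ p) := ENNReal.ofReal_le_ofReal h1

lemma sum_mu_le (a : ℕ → ℝ) {p : ℝ} (hp : 1 ≤ p) (n : ℕ) :
    ∑ j ∈ Finset.range (n+1), (mu Measure.count a j) ^ p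
      ≤ ∑' k, ENNReal.ofReal (|a k| ^ p) := by
  have hp0 : (0:ℝ) < p := lt_of_lt_of_le zero_lt_one hp
  by_cases htop : ∃ j ≤ n, mu Measure.count a j = ⊤
  · obtain ⟨j, _, hj⟩ := htop
    rw [tsum_eq_top_of_mu_eq_top hp hj]
    exact le_top
  push_neg at htop
  by_cases hzero : ∃ j, j ≤ n ∧ mu Measure.count a j = 0
  · set j₀ := Nat.find hzero with hj₀def
    have hj₀ : mu Measure.count a j₀ = 0 ∧ j₀ ≤ n := by
      have := Nat.find_spec hzero
      exact ⟨this.2, this.1⟩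
    have hsum : ∑ j ∈ Finset.range (n+1), (mu Measure.count a j) ^ p
        = ∑ j ∈ Finset.range j₀, (mu Measure.count a j) ^ p := by
      refine (Finset.sum_subset (Finset.range_subset_range.2 (by omega)) ?_).symm
      intro j _ hj
      have hj₀j : j₀ ≤ j := by
        simp only [Finset.mem_range, not_lt] at hj
        exact hj
      have : mu Measure.count a j ≤ mu Measure.count a j₀ :=
        mu_antitone a (by exact_mod_cast hj₀j)
      rw [hj₀.1] at this
      rw [le_zero_iff.1 this, ENNReal.zero_rpow_of_pos hp0]
    rw [hsum]
    rcases Nat.eq_zero_or_pos j₀ with h0 | h0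
    · rw [h0]; simp
    · have hj₀1 : j₀ - 1 + 1 = j₀ := by omega
      rw [← hj₀1]
      refine sum_mu_le_core a hp0 (j₀ - 1) ?_ ?_
      · intro j hj
        have := Nat.find_min hzero (m := j) (by omega)
        push_neg at this
        exact this (by omega)
      · intro j hj
        exact htop j (by omega)
  · push_neg at hzero
    exact sum_mu_le_core a hp0 n (fun j hj => hzero j hj) htop

lemma holder_mu (a : ℕ → ℝ) {p q : ℝ} (hpq : Real.HolderConjugate p q) (n : ℕ) :
    ∑ j ∈ Finset.range (n+1), mu Measure.count a j ≤
      ((n:ℝ≥0∞)+1) ^ (1/q) * (∑' k, ENNReal.ofReal (|a k| ^ p)) ^ (1/p) := by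
  set f : ℕ → ℝ≥0∞ := fun j => if j ∈ Finset.range (n+1) then mu Measure.count a j else 0
    with hf
  set g : ℕ → ℝ≥0∞ := fun j => if j ∈ Finset.range (n+1) then 1 else 0 with hg
  have h1 : ∑ j ∈ Finset.range (n+1), mu Measure.count a j
      = ∫⁻ j, (f * g) j ∂Measure.count := by
    rw [lintegral_count, tsum_eq_sum (s := Finset.range (n+1))
      (fun j hj => by simp only [Pi.mul_apply, hf, hg, if_neg hj, mul_zero])]
    exact Finset.sum_congr rfl fun j hj => by
      simp only [Pi.mul_apply, hf, hg, if_pos hj, mul_one]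
  have h2 : ∫⁻ j, f j ^ p ∂Measure.count ≤ ∑' k, ENNReal.ofReal (|a k| ^ p) := by
    rw [lintegral_count, tsum_eq_sum (s := Finset.range (n+1)) (fun j hj => by
      simp only [hf, if_neg hj]; exact ENNReal.zero_rpow_of_pos hpq.pos)]
    refine le_trans (le_of_eq (Finset.sum_congr rfl fun j hj => by
      simp only [hf, if_pos hj])) (sum_mu_le a hpq.lt.le n)
  have h3 : ∫⁻ j, g j ^ q ∂Measure.count = (n:ℝ≥0∞) + 1 := by
    rw [lintegral_count, tsum_eq_sum (s := Finset.range (n+1)) (fun j hj => by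
      simp only [hg, if_neg hj]; exact ENNReal.zero_rpow_of_pos hpq.symm.pos),
      Finset.sum_congr rfl (fun j hj => by
        simp only [hg, if_pos hj, ENNReal.one_rpow] : ∀ j ∈ Finset.range (n+1), g j ^ q = 1),
      Finset.sum_const, Finset.card_range, nsmul_eq_mul, mul_one]
    push_cast; ring
  calc ∑ j ∈ Finset.range (n+1), mu Measure.count a j
      = ∫⁻ j, (f * g) j ∂Measure.count := h1
    _ ≤ (∫⁻ j, f j ^ p ∂Measure.count) ^ (1/p) * (∫⁻ j, g j ^ q ∂Measure.count) ^ (1/q) :=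
        ENNReal.lintegral_mul_le_Lp_mul_Lq _ hpq
          (measurable_of_countable f).aemeasurable (measurable_of_countable g).aemeasurable
    _ ≤ (∑' k, ENNReal.ofReal (|a k| ^ p)) ^ (1/p) * ((n:ℝ≥0∞)+1) ^ (1/q) := by
        rw [h3]
        exact mul_le_mul_left (ENNReal.rpow_le_rpow h2 (div_nonneg zero_le_one hpq.nonneg)) _
    _ = ((n:ℝ≥0∞)+1) ^ (1/q) * (∑' k, ENNReal.ofReal (|a k| ^ p)) ^ (1/p) := mul_comm _ _

lemma abel_aux (R : ℝ) (x v Λ : ℕ → ℝ) (hv : ∀ j, 0 ≤ v j)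
    (hva : ∀ j, v (j+1) ≤ v j) (hΛ0 : Λ 0 = 0)
    (hS : ∀ N, ∑ j ∈ Finset.range N, x j ≤ R * Λ N) :
    ∀ N, ∑ j ∈ Finset.range N, x j * v j
        + (R * Λ N - ∑ j ∈ Finset.range N, x j) * v N
      ≤ R * ∑ j ∈ Finset.range N, (Λ (j+1) - Λ j) * v j := by
  intro N
  induction N with
  | zero => simp [hΛ0]
  | succ N ih =>
    have h1 : 0 ≤ R * Λ (N+1) - ∑ j ∈ Finset.range (N+1), x j := sub_nonneg.2 (hS (N+1))
    have h2 : (R * Λ (N+1) - ∑ j ∈ Finset.range (N+1), x j) * v (N+1)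
        ≤ (R * Λ (N+1) - ∑ j ∈ Finset.range (N+1), x j) * v N :=
      mul_le_mul_of_nonneg_left (hva N) h1
    have h3 := Finset.sum_range_succ x N
    rw [Finset.sum_range_succ (fun j => x j * v j),
      Finset.sum_range_succ (fun j => (Λ (j+1) - Λ j) * v j)]
    have expand : ∑ j ∈ Finset.range N, x j * v j + x N * v N
        + (R * Λ (N+1) - ∑ j ∈ Finset.range (N+1), x j) * v N
        = (∑ j ∈ Finset.range N, x j * v j
            + (R * Λ N - ∑ j ∈ Finset.range N, x j) * v N)
          + R * ((Λ (N+1) - Λ N) * v N) := by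
      rw [h3]; ring
    calc ∑ j ∈ Finset.range N, x j * v j + x N * v N
          + (R * Λ (N+1) - ∑ j ∈ Finset.range (N+1), x j) * v (N+1)
        ≤ ∑ j ∈ Finset.range N, x j * v j + x N * v N
          + (R * Λ (N+1) - ∑ j ∈ Finset.range (N+1), x j) * v N := by linarith
      _ = (∑ j ∈ Finset.range N, x j * v j
            + (R * Λ N - ∑ j ∈ Finset.range N, x j) * v N)
          + R * ((Λ (N+1) - Λ N) * v N) := expand
      _ ≤ R * ∑ j ∈ Finset.range N, (Λ (j+1) - Λ j) * v j
          + R * ((Λ (N+1) - Λ N) * v N) := by linarith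
      _ = R * (∑ j ∈ Finset.range N, (Λ (j+1) - Λ j) * v j + (Λ (N+1) - Λ N) * v N) := by ring

lemma abel_real (R : ℝ) (x v Λ : ℕ → ℝ) (hv : ∀ j, 0 ≤ v j)
    (hva : ∀ j, v (j+1) ≤ v j) (hΛ0 : Λ 0 = 0)
    (hS : ∀ N, ∑ j ∈ Finset.range N, x j ≤ R * Λ N) (N : ℕ) :
    ∑ j ∈ Finset.range N, x j * v j
      ≤ R * ∑ j ∈ Finset.range N, (Λ (j+1) - Λ j) * v j := by
  have h := abel_aux R x v Λ hv hva hΛ0 hS N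
  have h1 : 0 ≤ (R * Λ N - ∑ j ∈ Finset.range N, x j) * v N :=
    mul_nonneg (sub_nonneg.2 (hS N)) (hv N)
  linarith

/-- telescoping bound : `∑_{j<N} (j+1)^{-(1+β)} ≤ 1 + 1/β` for `0 < β`. -/
lemma sum_rpow_neg_le {β : ℝ} (hβ : 0 < β) (N : ℕ) :
    ∑ j ∈ Finset.range N, ((j:ℝ)+1) ^ (-(1+β)) ≤ 1 + 1/β := by
  rcases N with _ | M
  · simp; positivity
  rw [Finset.sum_range_succ']
  have h0 : ((0:ℕ):ℝ) + 1 = 1 := by norm_num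
  have hstep : ∀ i : ℕ, (((i+1:ℕ):ℝ)+1) ^ (-(1+β))
      ≤ (1/β) * (((i:ℝ)+1) ^ (-β) - (((i+1:ℕ):ℝ)+1) ^ (-β)) := by
    intro i
    set u : ℝ := (i:ℝ) + 1 with hu
    have hu1 : 1 ≤ u := by
      rw [hu]; have : (0:ℝ) ≤ (i:ℝ) := Nat.cast_nonneg i; linarith
    have hu0 : 0 < u := lt_of_lt_of_le zero_lt_one hu1
    have hu10 : 0 < u + 1 := by linarith
    have hlog : 1/(u+1) ≤ Real.log ((u+1)/u) := by
      have h := Real.log_le_sub_one_of_pos (x := u/(u+1)) (by positivity)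
      have hlog2 : Real.log ((u+1)/u) = - Real.log (u/(u+1)) := by
        rw [← Real.log_inv]; congr 1; field_simp
      have : u/(u+1) - 1 = -(1/(u+1)) := by field_simp; ring
      rw [hlog2]; rw [this] at h; linarith
    have hexp : 1 + β * (1/(u+1)) ≤ ((u+1)/u) ^ β := by
      rw [Real.rpow_def_of_pos (by positivity)]
      calc 1 + β * (1/(u+1)) ≤ 1 + β * Real.log ((u+1)/u) := by
            have := mul_le_mul_of_nonneg_left hlog hβ.le; linarith
        _ ≤ Real.exp (Real.log ((u+1)/u) * β) := by
            rw [mul_comm]; exact Real.add_one_le_exp _ |>.trans_eq' (by ring_nf)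
    -- from hexp : u^{-β} - (u+1)^{-β} ≥ β (u+1)^{-(1+β)}
    have hrw : ((u+1)/u) ^ β = (u+1) ^ β * u ^ (-β) := by
      rw [Real.div_rpow (by positivity) hu0.le, Real.rpow_neg hu0.le, div_eq_mul_inv]
    have hkey : β * (u+1) ^ (-(1+β)) ≤ u ^ (-β) - (u+1) ^ (-β) := by
      have hpw : (0:ℝ) < (u+1) ^ (-β) := Real.rpow_pos_of_pos hu10 _
      have hmul := mul_le_mul_of_nonneg_left hexp hpw.le
      rw [hrw] at hmul
      have e1 : (u+1) ^ (-β) * ((u+1) ^ β * u ^ (-β)) = u ^ (-β) := by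
        rw [← mul_assoc, ← Real.rpow_add hu10]; simp
      have e2 : (u+1) ^ (-β) * (1 + β * (1/(u+1))) 
          = (u+1) ^ (-β) + β * ((u+1) ^ (-β) * (u+1)⁻¹) := by ring
      have e3 : (u+1) ^ (-β) * (u+1)⁻¹ = (u+1) ^ (-(1+β)) := by
        rw [← Real.rpow_neg_one (u+1), ← Real.rpow_add hu10]; ring_nf
      rw [e2, e3, e1] at hmul
      linarith
    have hcast : (((i+1:ℕ):ℝ)+1) = u + 1 := by push_cast [hu]; ring
    have hcast2 : ((i:ℝ)+1) = u := hu.symm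
    rw [hcast]
    calc (u+1) ^ (-(1+β)) = (1/β) * (β * (u+1) ^ (-(1+β))) := by field_simp
      _ ≤ (1/β) * (u ^ (-β) - (u+1) ^ (-β)) :=
          mul_le_mul_of_nonneg_left hkey (by positivity)
  have hsum : ∑ i ∈ Finset.range M, ((((i+1:ℕ)):ℝ)+1) ^ (-(1+β)) ≤ 1/β := by
    calc ∑ i ∈ Finset.range M, ((((i+1:ℕ)):ℝ)+1) ^ (-(1+β))
        ≤ ∑ i ∈ Finset.range M, (1/β) * (((i:ℝ)+1) ^ (-β) - ((((i+1:ℕ)):ℝ)+1) ^ (-β)) :=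
          Finset.sum_le_sum fun i _ => hstep i
      _ = (1/β) * ∑ i ∈ Finset.range M, ((fun i : ℕ => ((i:ℝ)+1) ^ (-β)) i
            - (fun i : ℕ => ((i:ℝ)+1) ^ (-β)) (i+1)) := by
          rw [Finset.mul_sum]
      _ = (1/β) * ((((0:ℕ):ℝ)+1) ^ (-β) - (((M:ℕ):ℝ)+1) ^ (-β)) := by
          rw [Finset.sum_range_sub' (fun i : ℕ => ((i:ℝ)+1) ^ (-β))]
      _ ≤ 1/β := by
          have h1 : (0:ℝ) ≤ ((M:ℝ)+1) ^ (-β) := (Real.rpow_pos_of_pos (by positivity) _).le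
          have h2 : (((0:ℕ):ℝ)+1) ^ (-β) = (1:ℝ) := by
            norm_num
          rw [h2]
          have h3 : (0:ℝ) ≤ 1/β := by positivity
          have : (1:ℝ) - ((M:ℝ)+1) ^ (-β) ≤ 1 := by push_cast; linarith
          calc (1/β) * ((1:ℝ) - (((M:ℕ):ℝ)+1) ^ (-β)) ≤ (1/β) * 1 := by
                refine mul_le_mul_of_nonneg_left ?_ h3
                push_cast; linarith
            _ = 1/β := mul_one _
  have hf0 : (((0:ℕ):ℝ)+1) ^ (-(1+β)) = (1:ℝ) := by norm_num
  rw [hf0]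
  linarith

/-- `log(x+1) ≤ log x + 1/x` style bound: `log(y+1) - log y ≤ 1/y` for `y ≥ 1`. -/
lemma log_succ_sub_le {y : ℝ} (hy : 0 < y) : Real.log (y+1) - Real.log y ≤ 1/y := by
  have h1 : Real.log (y+1) - Real.log y = Real.log ((y+1)/y) := by
    rw [Real.log_div (by positivity) (by positivity)]
  rw [h1]
  have := Real.log_le_sub_one_of_pos (x := (y+1)/y) (by positivity)
  have h2 : (y+1)/y - 1 = 1/y := by field_simp; ring
  linarith

/-- `log(j+2)/(j+1)` is antitone. -/
lemma log_ratio_antitone (j : ℕ) :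
    Real.log ((j:ℝ)+3) / ((j:ℝ)+2) ≤ Real.log ((j:ℝ)+2) / ((j:ℝ)+1) := by
  have hj0 : (0:ℝ) ≤ (j:ℝ) := Nat.cast_nonneg j
  rw [div_le_div_iff₀ (by linarith) (by linarith)]
  have h1 : Real.log ((j:ℝ)+3) ≤ Real.log ((j:ℝ)+2) + 1/((j:ℝ)+2) := by
    have := log_succ_sub_le (y := (j:ℝ)+2) (by linarith)
    have e : (j:ℝ)+2+1 = (j:ℝ)+3 := by ring
    rw [e] at this; linarith
  have h2 : ((j:ℝ)+1)/((j:ℝ)+2) ≤ Real.log ((j:ℝ)+2) := by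
    rcases Nat.eq_zero_or_pos j with h0 | h0
    · subst h0
      norm_num
      nlinarith [Real.log_two_gt_d9]
    · have h3 : (1:ℝ) ≤ (j:ℝ) := by exact_mod_cast h0
      have h4 : ((j:ℝ)+1)/((j:ℝ)+2) ≤ 1 := by
        rw [div_le_one (by linarith)]; linarith
      have h5 : (1:ℝ) ≤ Real.log ((j:ℝ)+2) := by
        have he : Real.exp 1 ≤ (j:ℝ)+2 := by
          have := Real.exp_one_lt_d9
          linarith
        calc (1:ℝ) = Real.log (Real.exp 1) := (Real.log_exp 1).symm
          _ ≤ Real.log ((j:ℝ)+2) := Real.log_le_log (Real.exp_pos 1) he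
      linarith
  calc Real.log ((j:ℝ)+3) * ((j:ℝ)+1)
      ≤ (Real.log ((j:ℝ)+2) + 1/((j:ℝ)+2)) * ((j:ℝ)+1) := by
        refine mul_le_mul_of_nonneg_right h1 (by linarith)
    _ = Real.log ((j:ℝ)+2) * ((j:ℝ)+1) + ((j:ℝ)+1)/((j:ℝ)+2) := by ring
    _ ≤ Real.log ((j:ℝ)+2) * ((j:ℝ)+1) + Real.log ((j:ℝ)+2) := by linarith
    _ = Real.log ((j:ℝ)+2) * ((j:ℝ)+2) := by ring

/-- `log y ≤ y^α/α` for `y > 0`, `α > 0`. -/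
lemma log_le_rpow_div {y α : ℝ} (hy : 0 < y) (hα : 0 < α) :
    Real.log y ≤ y ^ α / α := by
  have h1 : Real.log (y ^ α) = α * Real.log y := Real.log_rpow hy α
  have h2 : Real.log (y ^ α) ≤ y ^ α - 1 := Real.log_le_sub_one_of_pos (Real.rpow_pos_of_pos hy α)
  have h3 : α * Real.log y ≤ y ^ α := by rw [← h1]; linarith
  rw [le_div_iff₀ hα]; linarith [h3]

lemma real_bound {ε : ℝ} (hε0 : 0 < ε) (hε1 : ε ≤ 1) {R : ℝ} (hR : 0 ≤ R)
    (x : ℕ → ℝ) (hx0 : ∀ j, 0 ≤ x j) (hxa : ∀ j, x (j+1) ≤ x j)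
    (hS : ∀ n : ℕ, ∑ j ∈ Finset.range (n+1), x j ≤ R * Real.log ((n:ℝ)+2)) (N : ℕ) :
    ∑ j ∈ Finset.range N, x j ^ (1+ε) ≤ (4*R/ε) ^ (1+ε) := by
  have hanti : Antitone x := antitone_nat_of_succ_le hxa
  set v : ℕ → ℝ := fun j => (Real.log ((j:ℝ)+2) / ((j:ℝ)+1)) ^ ε with hv
  have hlogpos : ∀ j : ℕ, 0 < Real.log ((j:ℝ)+2) := by
    intro j
    refine Real.log_pos ?_
    have : (0:ℝ) ≤ (j:ℝ) := Nat.cast_nonneg j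
    linarith
  have hjpos : ∀ j : ℕ, (0:ℝ) < (j:ℝ)+1 := fun j => by
    have : (0:ℝ) ≤ (j:ℝ) := Nat.cast_nonneg j; linarith
  have hv0 : ∀ j, 0 ≤ v j := fun j =>
    Real.rpow_nonneg (div_nonneg (hlogpos j).le (hjpos j).le) _
  have hva : ∀ j, v (j+1) ≤ v j := by
    intro j
    rw [hv]
    have hc : ((j+1:ℕ):ℝ) + 2 = (j:ℝ)+3 := by push_cast; ring
    have hc2 : ((j+1:ℕ):ℝ) + 1 = (j:ℝ)+2 := by push_cast; ring
    simp only [hc, hc2]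
    have hb : (0:ℝ) ≤ Real.log ((j:ℝ)+3) / ((j:ℝ)+2) :=
      div_nonneg (Real.log_nonneg (by linarith [hjpos j])) (by linarith [hjpos j])
    exact Real.rpow_le_rpow hb (log_ratio_antitone j) hε0.le
  -- pointwise bound on x
  have hxle : ∀ j : ℕ, x j ≤ R * (Real.log ((j:ℝ)+2) / ((j:ℝ)+1)) := by
    intro j
    have hcard : ((j+1:ℕ):ℝ) * x j ≤ ∑ i ∈ Finset.range (j+1), x i := by
      have h := Finset.card_nsmul_le_sum (Finset.range (j+1)) x (x j)
        (fun i hi => hanti (Nat.lt_succ_iff.1 (Finset.mem_range.1 hi)))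
      rwa [Finset.card_range, nsmul_eq_mul] at h
    have h2 := hS j
    have h3 : ((j+1:ℕ):ℝ) * x j ≤ R * Real.log ((j:ℝ)+2) := le_trans hcard h2
    have h4 : ((j+1:ℕ):ℝ) = (j:ℝ)+1 := by push_cast; ring
    rw [h4] at h3
    rw [← mul_div_assoc, le_div_iff₀ (hjpos j)]
    linarith [h3]
  -- pointwise bound on x^ (1+ε)
  have step1 : ∀ j : ℕ, x j ^ (1+ε) ≤ R ^ ε * (x j * v j) := by
    intro j
    rcases eq_or_lt_of_le (hx0 j) with h0 | h0
    · rw [← h0, Real.zero_rpow (by positivity : (0:ℝ) < 1+ε).ne']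
      exact mul_nonneg (Real.rpow_nonneg hR _) (mul_nonneg le_rfl (hv0 j))
    · have e1 : x j ^ (1+ε) = x j * x j ^ ε := by
        rw [Real.rpow_add h0, Real.rpow_one]
      have e2 : x j ^ ε ≤ R ^ ε * v j := by
        rw [hv, ← Real.mul_rpow hR (div_nonneg (hlogpos j).le (hjpos j).le)]
        exact Real.rpow_le_rpow (hx0 j) (hxle j) hε0.le
      calc x j ^ (1+ε) = x j * x j ^ ε := e1
        _ ≤ x j * (R ^ ε * v j) := mul_le_mul_of_nonneg_left e2 (hx0 j)
        _ = R ^ ε * (x j * v j) := by ring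
  -- Abel summation
  set Λ : ℕ → ℝ := fun n => Real.log ((n:ℝ)+1) with hΛ
  have habel : ∑ j ∈ Finset.range N, x j * v j
      ≤ R * ∑ j ∈ Finset.range N, (Λ (j+1) - Λ j) * v j := by
    refine abel_real R x v Λ hv0 hva (by simp [hΛ]) (fun n => ?_) N
    rcases Nat.eq_zero_or_pos n with h0 | h0
    · subst h0; simp [hΛ]
    · obtain ⟨m, rfl⟩ := Nat.exists_eq_succ_of_ne_zero h0.ne'
      have hc : ((m+1:ℕ):ℝ) + 1 = (m:ℝ)+2 := by push_cast; ring
      rw [hΛ]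
      simp only [hc]
      exact hS m
  -- bound each Abel term
  have step3 : ∀ j : ℕ, (Λ (j+1) - Λ j) * v j
      ≤ (4/ε) ^ ε * ((j:ℝ)+1) ^ (-(1+ε/2)) := by
    intro j
    have hdl : Λ (j+1) - Λ j ≤ 1/((j:ℝ)+1) := by
      rw [hΛ]
      have hc : ((j+1:ℕ):ℝ) + 1 = ((j:ℝ)+1) + 1 := by push_cast; ring
      simp only [hc]
      exact log_succ_sub_le (hjpos j)
    have hdl0 : 0 ≤ Λ (j+1) - Λ j := by
      rw [hΛ, sub_nonneg]
      refine Real.log_le_log (hjpos j) ?_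
      have : ((j+1:ℕ):ℝ) = (j:ℝ)+1 := by push_cast; ring
      rw [this]; linarith
    -- bound v j
    have hbase : Real.log ((j:ℝ)+2) / ((j:ℝ)+1) ≤ (4/ε) * ((j:ℝ)+1) ^ (ε/2 - 1) := by
      have h1 : Real.log ((j:ℝ)+2) ≤ (2/ε) * ((j:ℝ)+2) ^ (ε/2) := by
        have := log_le_rpow_div (y := (j:ℝ)+2) (by linarith [hjpos j]) (half_pos hε0)
        calc Real.log ((j:ℝ)+2) ≤ ((j:ℝ)+2) ^ (ε/2) / (ε/2) := this
          _ = (2/ε) * ((j:ℝ)+2) ^ (ε/2) := by field_simp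
      have h2 : ((j:ℝ)+2) ^ (ε/2) ≤ 2 * ((j:ℝ)+1) ^ (ε/2) := by
        have h21 : ((j:ℝ)+2) ^ (ε/2) ≤ (2*((j:ℝ)+1)) ^ (ε/2) := by
          refine Real.rpow_le_rpow (by linarith [hjpos j]) (by linarith [hjpos j]) (half_pos hε0).le
        have h22 : (2*((j:ℝ)+1)) ^ (ε/2) = 2 ^ (ε/2) * ((j:ℝ)+1) ^ (ε/2) :=
          Real.mul_rpow (by norm_num) (hjpos j).le
        have h23 : (2:ℝ) ^ (ε/2) ≤ 2 := by
          calc (2:ℝ) ^ (ε/2) ≤ 2 ^ (1:ℝ) :=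
            Real.rpow_le_rpow_of_exponent_le one_le_two (by linarith)
            _ = 2 := Real.rpow_one 2
        calc ((j:ℝ)+2) ^ (ε/2) ≤ 2 ^ (ε/2) * ((j:ℝ)+1) ^ (ε/2) := h21.trans_eq h22
          _ ≤ 2 * ((j:ℝ)+1) ^ (ε/2) := by
              refine mul_le_mul_of_nonneg_right h23 (Real.rpow_nonneg (hjpos j).le _)
      have h3 : Real.log ((j:ℝ)+2) ≤ (4/ε) * ((j:ℝ)+1) ^ (ε/2) := by
        calc Real.log ((j:ℝ)+2) ≤ (2/ε) * (2 * ((j:ℝ)+1) ^ (ε/2)) := by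
              refine h1.trans (mul_le_mul_of_nonneg_left h2 (by positivity))
          _ = (4/ε) * ((j:ℝ)+1) ^ (ε/2) := by ring
      rw [div_le_iff₀ (hjpos j)]
      calc Real.log ((j:ℝ)+2) ≤ (4/ε) * ((j:ℝ)+1) ^ (ε/2) := h3
        _ = (4/ε) * ((j:ℝ)+1) ^ (ε/2 - 1) * ((j:ℝ)+1) := by
            rw [Real.rpow_sub (hjpos j), Real.rpow_one]; field_simp
    have hvle : v j ≤ (4/ε) ^ ε * ((j:ℝ)+1) ^ (-(ε/2)) := by
      rw [hv]
      calc (Real.log ((j:ℝ)+2) / ((j:ℝ)+1)) ^ ε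
          ≤ ((4/ε) * ((j:ℝ)+1) ^ (ε/2 - 1)) ^ ε := by
            refine Real.rpow_le_rpow (div_nonneg (hlogpos j).le (hjpos j).le) hbase hε0.le
        _ = (4/ε) ^ ε * (((j:ℝ)+1) ^ (ε/2 - 1)) ^ ε :=
            Real.mul_rpow (by positivity) (Real.rpow_nonneg (hjpos j).le _)
        _ = (4/ε) ^ ε * ((j:ℝ)+1) ^ ((ε/2 - 1) * ε) := by
            rw [← Real.rpow_mul (hjpos j).le]
        _ ≤ (4/ε) ^ ε * ((j:ℝ)+1) ^ (-(ε/2)) := by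
            refine mul_le_mul_of_nonneg_left ?_ (by positivity)
            refine Real.rpow_le_rpow_of_exponent_le (by linarith [hjpos j]) ?_
            nlinarith
    calc (Λ (j+1) - Λ j) * v j
        ≤ (1/((j:ℝ)+1)) * ((4/ε) ^ ε * ((j:ℝ)+1) ^ (-(ε/2))) := by
          refine mul_le_mul hdl hvle (hv0 j) (by positivity)
      _ = (4/ε) ^ ε * (((j:ℝ)+1) ^ (-(ε/2)) * ((j:ℝ)+1) ^ (-(1:ℝ))) := by
          rw [Real.rpow_neg_one]; ring
      _ = (4/ε) ^ ε * ((j:ℝ)+1) ^ (-(1+ε/2)) := by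
          rw [← Real.rpow_add (hjpos j)]; ring_nf
  -- sum the Abel terms
  have step4 : ∑ j ∈ Finset.range N, (Λ (j+1) - Λ j) * v j
      ≤ (4/ε) ^ ε * (1 + 2/ε) := by
    calc ∑ j ∈ Finset.range N, (Λ (j+1) - Λ j) * v j
        ≤ ∑ j ∈ Finset.range N, (4/ε) ^ ε * ((j:ℝ)+1) ^ (-(1+ε/2)) :=
          Finset.sum_le_sum fun j _ => step3 j
      _ = (4/ε) ^ ε * ∑ j ∈ Finset.range N, ((j:ℝ)+1) ^ (-(1+ε/2)) := by
          rw [Finset.mul_sum]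
      _ ≤ (4/ε) ^ ε * (1 + 1/(ε/2)) := by
          refine mul_le_mul_of_nonneg_left (sum_rpow_neg_le (half_pos hε0) N) (by positivity)
      _ = (4/ε) ^ ε * (1 + 2/ε) := by
          rw [one_div_div]
  -- final numeric assembly
  have main : ∑ j ∈ Finset.range N, x j ^ (1+ε) ≤ R ^ ε * (R * ((4/ε) ^ ε * (1 + 2/ε))) := by
    calc ∑ j ∈ Finset.range N, x j ^ (1+ε)
        ≤ ∑ j ∈ Finset.range N, R ^ ε * (x j * v j) := Finset.sum_le_sum fun j _ => step1 j
      _ = R ^ ε * ∑ j ∈ Finset.range N, x j * v j := by rw [Finset.mul_sum]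
      _ ≤ R ^ ε * (R * ∑ j ∈ Finset.range N, (Λ (j+1) - Λ j) * v j) := by
          refine mul_le_mul_of_nonneg_left habel (Real.rpow_nonneg hR _)
      _ ≤ R ^ ε * (R * ((4/ε) ^ ε * (1 + 2/ε))) := by
          refine mul_le_mul_of_nonneg_left (mul_le_mul_of_nonneg_left step4 hR)
            (Real.rpow_nonneg hR _)
  refine main.trans ?_
  rcases eq_or_lt_of_le hR with h0 | h0
  · rw [← h0, Real.zero_rpow (by positivity : (0:ℝ) < ε).ne', zero_mul, mul_zero, zero_div,
      Real.zero_rpow (by positivity : (0:ℝ) < 1+ε).ne']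
  · have hfr : 4*R/ε = (4/ε)*R := by ring
    have e1 : (4*R/ε) ^ (1+ε) = (4*R/ε) * ((4/ε) ^ ε * R ^ ε) := by
      rw [Real.rpow_add (by positivity), Real.rpow_one, hfr,
        Real.mul_rpow (by positivity) hR]
    rw [e1]
    have h2' : R * (1 + 2/ε) ≤ 4*R/ε := by
      have hd : 1 + 2/ε ≤ 4/ε := by
        have h1 : (1:ℝ) ≤ 2/ε := by rw [le_div_iff₀ hε0]; linarith
        have h4 : (4:ℝ)/ε = 2/ε + 2/ε := by ring
        linarith
      calc R * (1 + 2/ε) ≤ R * (4/ε) := mul_le_mul_of_nonneg_left hd hR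
        _ = 4*R/ε := by ring
    calc R ^ ε * (R * ((4/ε) ^ ε * (1 + 2/ε)))
        = ((4/ε) ^ ε * R ^ ε) * (R * (1 + 2/ε)) := by ring
      _ ≤ ((4/ε) ^ ε * R ^ ε) * (4*R/ε) := by
          refine mul_le_mul_of_nonneg_left h2' ?_
          positivity
      _ = (4*R/ε) * ((4/ε) ^ ε * R ^ ε) := by ring

lemma logpos (n : ℕ) : (0:ℝ) < Real.log ((n:ℝ)+2) := by
  refine Real.log_pos ?_
  have : (0:ℝ) ≤ (n:ℝ) := Nat.cast_nonneg n
  linarith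

lemma direction2 (a : ℕ → ℝ) {p : ℝ} (hp1 : 1 < p) (hp2 : p ≤ 2) :
    ENNReal.ofReal (p-1) * (∑' k : ℕ, ENNReal.ofReal (|a k| ^ p)) ^ (1/p)
      ≤ 4 * ⨆ n : ℕ, (∑ j ∈ Finset.range (n+1), mu Measure.count a (j:ℝ)) /
          ENNReal.ofReal (Real.log ((n:ℝ)+2)) := by
  set M := ⨆ n : ℕ, (∑ j ∈ Finset.range (n+1), mu Measure.count a (j:ℝ)) /
      ENNReal.ofReal (Real.log ((n:ℝ)+2)) with hM
  by_cases hMtop : M = ⊤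
  · rw [hMtop, ENNReal.mul_top (by norm_num)]
    exact le_top
  set L : ℕ → ℝ≥0∞ := fun n => ENNReal.ofReal (Real.log ((n:ℝ)+2)) with hL
  have hL0 : ∀ n, L n ≠ 0 := fun n => by
    simp only [hL, ne_eq, ENNReal.ofReal_eq_zero, not_le]; exact logpos n
  have hLt : ∀ n, L n ≠ ⊤ := fun n => ENNReal.ofReal_ne_top
  have hσ : ∀ n : ℕ, ∑ j ∈ Finset.range (n+1), mu Measure.count a (j:ℝ) ≤ M * L n := by
    intro n
    have h1 : (∑ j ∈ Finset.range (n+1), mu Measure.count a (j:ℝ)) / L n ≤ M :=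
      le_iSup (fun n : ℕ => (∑ j ∈ Finset.range (n+1), mu Measure.count a (j:ℝ)) / L n) n
    exact (ENNReal.div_le_iff_le_mul (Or.inl (hL0 n)) (Or.inl (hLt n))).1 h1
  have hmufin : ∀ n : ℕ, mu Measure.count a (n:ℝ) ≠ ⊤ := by
    intro n
    have h1 : mu Measure.count a (n:ℝ) ≤ ∑ j ∈ Finset.range (n+1), mu Measure.count a (j:ℝ) :=
      Finset.single_le_sum (f := fun j : ℕ => mu Measure.count a (j:ℝ))
        (fun j _ => zero_le) (Finset.self_mem_range_succ n)
    exact ((h1.trans (hσ n)).trans_lt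
      (ENNReal.mul_lt_top (lt_top_iff_ne_top.2 hMtop) (lt_top_iff_ne_top.2 (hLt n)))).ne
  set x : ℕ → ℝ := fun j => (mu Measure.count a (j:ℝ)).toReal with hx
  set R : ℝ := M.toReal with hR
  have hR0 : 0 ≤ R := ENNReal.toReal_nonneg
  have hx0 : ∀ j, 0 ≤ x j := fun j => ENNReal.toReal_nonneg
  have hxa : ∀ j, x (j+1) ≤ x j := by
    intro j
    refine ENNReal.toReal_mono (hmufin j) (mu_antitone a ?_)
    push_cast; linarith
  have hSx : ∀ n : ℕ, ∑ j ∈ Finset.range (n+1), x j ≤ R * Real.log ((n:ℝ)+2) := by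
    intro n
    have h1 := ENNReal.toReal_mono
      (ENNReal.mul_ne_top hMtop (hLt n)) (hσ n)
    rw [ENNReal.toReal_sum (fun j _ => hmufin j)] at h1
    rwa [ENNReal.toReal_mul, ENNReal.toReal_ofReal (logpos n).le] at h1
  set ε : ℝ := p - 1 with hε
  have hε0 : 0 < ε := by rw [hε]; linarith
  have hε1 : ε ≤ 1 := by rw [hε]; linarith
  have hpe : p = 1 + ε := by rw [hε]; ring
  have hp0 : (0:ℝ) < p := by linarith
  -- bound the tsum
  have hT : (∑' k : ℕ, ENNReal.ofReal (|a k| ^ p)) ≤ ENNReal.ofReal ((4*R/ε) ^ p) := by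
    refine (tsum_ofReal_le a hp0).trans ?_
    rw [ENNReal.tsum_eq_iSup_nat]
    refine iSup_le fun N => ?_
    have heq : ∑ j ∈ Finset.range N, (mu Measure.count a (j:ℝ)) ^ p
        = ENNReal.ofReal (∑ j ∈ Finset.range N, x j ^ p) := by
      rw [ENNReal.ofReal_sum_of_nonneg (fun j _ => Real.rpow_nonneg (hx0 j) p)]
      refine Finset.sum_congr rfl fun j _ => ?_
      rw [← ENNReal.ofReal_rpow_of_nonneg (hx0 j) hp0.le, ENNReal.ofReal_toReal (hmufin j)]
    rw [heq]
    refine ENNReal.ofReal_le_ofReal ?_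
    rw [hpe]
    exact real_bound hε0 hε1 hR0 x hx0 hxa hSx N
  have hT2 : (∑' k : ℕ, ENNReal.ofReal (|a k| ^ p)) ^ (1/p) ≤ ENNReal.ofReal (4*R/ε) := by
    have h1 : ENNReal.ofReal ((4*R/ε) ^ p) = (ENNReal.ofReal (4*R/ε)) ^ p := by
      rw [ENNReal.ofReal_rpow_of_nonneg (by positivity) hp0.le]
    calc (∑' k : ℕ, ENNReal.ofReal (|a k| ^ p)) ^ (1/p)
        ≤ (ENNReal.ofReal ((4*R/ε) ^ p)) ^ (1/p) :=
          ENNReal.rpow_le_rpow hT (by positivity)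
      _ = (ENNReal.ofReal (4*R/ε)) ^ (p * (1/p)) := by
          rw [h1, ← ENNReal.rpow_mul]
      _ = ENNReal.ofReal (4*R/ε) := by
          rw [mul_one_div_cancel hp0.ne', ENNReal.rpow_one]
  calc ENNReal.ofReal (p-1) * (∑' k : ℕ, ENNReal.ofReal (|a k| ^ p)) ^ (1/p)
      ≤ ENNReal.ofReal ε * ENNReal.ofReal (4*R/ε) := by
        rw [← hε]
        exact mul_le_mul_right hT2 _
    _ = ENNReal.ofReal (ε * (4*R/ε)) := (ENNReal.ofReal_mul hε0.le).symm
    _ = ENNReal.ofReal (4*R) := by rw [mul_div_cancel₀]; exact hε0.ne'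
    _ = 4 * ENNReal.ofReal R := by
        rw [ENNReal.ofReal_mul (by norm_num)]
        norm_num
    _ = 4 * M := by rw [hR, ENNReal.ofReal_toReal hMtop]

lemma direction1 (a : ℕ → ℝ) (n : ℕ) :
    (∑ j ∈ Finset.range (n+1), mu Measure.count a (j:ℝ)) /
        ENNReal.ofReal (Real.log ((n:ℝ)+2))
      ≤ 4 * ⨆ (p : ℝ) (_ : 1 < p) (_ : p ≤ 2),
          ENNReal.ofReal (p-1) * (∑' k : ℕ, ENNReal.ofReal (|a k| ^ p)) ^ (1/p) := by
  set S := ⨆ (p : ℝ) (_ : 1 < p) (_ : p ≤ 2),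
      ENNReal.ofReal (p-1) * (∑' k : ℕ, ENNReal.ofReal (|a k| ^ p)) ^ (1/p) with hS
  have hSle : ∀ p : ℝ, 1 < p → p ≤ 2 →
      ENNReal.ofReal (p-1) * (∑' k : ℕ, ENNReal.ofReal (|a k| ^ p)) ^ (1/p) ≤ S := by
    intro p h1 h2
    rw [hS]
    exact le_iSup_of_le p (le_iSup_of_le h1 (le_iSup_of_le h2 le_rfl))
  have hL0 : ENNReal.ofReal (Real.log ((n:ℝ)+2)) ≠ 0 := by
    simp only [ne_eq, ENNReal.ofReal_eq_zero, not_le]; exact logpos n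
  have hLtop : ENNReal.ofReal (Real.log ((n:ℝ)+2)) ≠ ⊤ := ENNReal.ofReal_ne_top
  rw [ENNReal.div_le_iff_le_mul (Or.inl hL0) (Or.inl hLtop)]
  rcases Nat.eq_zero_or_pos n with hn0 | hn0
  · -- n = 0 : use p = 2
    subst hn0
    have h20 := sum_mu_le a (p := (2:ℝ)) one_le_two 0
    rw [Finset.sum_range_one] at h20 ⊢
    have hmu0 : mu Measure.count a ((0:ℕ):ℝ)
        ≤ (∑' k : ℕ, ENNReal.ofReal (|a k| ^ (2:ℝ))) ^ (1/(2:ℝ)) := by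
      calc mu Measure.count a ((0:ℕ):ℝ)
          = ((mu Measure.count a ((0:ℕ):ℝ)) ^ (2:ℝ)) ^ (1/(2:ℝ)) := by
            rw [← ENNReal.rpow_mul]
            norm_num
        _ ≤ (∑' k : ℕ, ENNReal.ofReal (|a k| ^ (2:ℝ))) ^ (1/(2:ℝ)) :=
            ENNReal.rpow_le_rpow h20 (by norm_num)
    have hS2 : (∑' k : ℕ, ENNReal.ofReal (|a k| ^ (2:ℝ))) ^ (1/(2:ℝ)) ≤ S := by
      have := hSle 2 one_lt_two le_rfl
      rwa [show (2:ℝ) - 1 = 1 by norm_num, ENNReal.ofReal_one, one_mul] at this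
    have hlog : (1:ℝ≥0∞) ≤ 4 * ENNReal.ofReal (Real.log (((0:ℕ):ℝ)+2)) := by
      have h1 : ENNReal.ofReal (1/4 : ℝ) ≤ ENNReal.ofReal (Real.log (((0:ℕ):ℝ)+2)) := by
        refine ENNReal.ofReal_le_ofReal ?_
        have := Real.log_two_gt_d9
        norm_num
        linarith
      calc (1:ℝ≥0∞) = ENNReal.ofReal 4 * ENNReal.ofReal (1/4 : ℝ) := by
            rw [← ENNReal.ofReal_mul (by norm_num)]; norm_num
        _ ≤ ENNReal.ofReal 4 * ENNReal.ofReal (Real.log (((0:ℕ):ℝ)+2)) :=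
            mul_le_mul_right h1 _
        _ = 4 * ENNReal.ofReal (Real.log (((0:ℕ):ℝ)+2)) := by norm_num
    calc mu Measure.count a ((0:ℕ):ℝ) ≤ S := hmu0.trans hS2
      _ = 1 * S := (one_mul S).symm
      _ ≤ (4 * ENNReal.ofReal (Real.log (((0:ℕ):ℝ)+2))) * S := mul_le_mul_left hlog S
      _ = 4 * S * ENNReal.ofReal (Real.log (((0:ℕ):ℝ)+2)) := by ring
  · -- n ≥ 1
    set Lr : ℝ := Real.log ((n:ℝ)+2) with hLr
    have hn1 : (1:ℝ) ≤ (n:ℝ) := by exact_mod_cast hn0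
    have hL1 : 1 ≤ Lr := by
      rw [hLr]
      have he : Real.exp 1 ≤ (n:ℝ)+2 := by
        have := Real.exp_one_lt_d9
        linarith
      calc (1:ℝ) = Real.log (Real.exp 1) := (Real.log_exp 1).symm
        _ ≤ Real.log ((n:ℝ)+2) := Real.log_le_log (Real.exp_pos 1) he
    have hLpos : 0 < Lr := lt_of_lt_of_le zero_lt_one hL1
    set p : ℝ := 1 + 1/Lr with hp
    set q : ℝ := Lr + 1 with hq
    have hp1 : 1 < p := by
      have h0 : 0 < 1/Lr := by positivity
      rw [hp]; linarith
    have hp2 : p ≤ 2 := by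
      rw [hp]
      have : 1/Lr ≤ 1 := by rw [div_le_one hLpos]; exact hL1
      linarith
    have hpq : Real.HolderConjugate p q := by
      refine Real.holderConjugate_iff.mpr ⟨?_, ?_⟩
      · exact hp1
      · rw [hp, hq]
        field_simp
    have hpm1 : p - 1 = 1/Lr := by rw [hp]; ring
    -- bound (n+1)^(1/q) by e
    have hq0 : 0 < q := by rw [hq]; linarith
    have hnq : ((n:ℝ≥0∞)+1) ^ (1/q) ≤ ENNReal.ofReal (Real.exp 1) := by
      have hcast : ((n:ℝ≥0∞)+1) = ENNReal.ofReal ((n:ℝ)+1) := by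
        rw [ENNReal.ofReal_add (Nat.cast_nonneg n) zero_le_one, ENNReal.ofReal_natCast,
          ENNReal.ofReal_one]
      rw [hcast, ENNReal.ofReal_rpow_of_pos (by linarith)]
      refine ENNReal.ofReal_le_ofReal ?_
      calc ((n:ℝ)+1) ^ (1/q) ≤ ((n:ℝ)+2) ^ (1/q) :=
            Real.rpow_le_rpow (by linarith) (by linarith) (by positivity)
        _ ≤ ((n:ℝ)+2) ^ (1/Lr) := by
            refine Real.rpow_le_rpow_of_exponent_le (by linarith) ?_
            rw [hq]
            refine one_div_le_one_div_of_le hLpos (by linarith)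
        _ = Real.exp 1 := by
            rw [Real.rpow_def_of_pos (by linarith), ← hLr, mul_one_div_cancel hLpos.ne']
    have hhold := holder_mu a hpq n
    have hTle : ENNReal.ofReal (1/Lr) * (∑' k : ℕ, ENNReal.ofReal (|a k| ^ p)) ^ (1/p) ≤ S := by
      have := hSle p hp1 hp2
      rwa [hpm1] at this
    have hLL : ENNReal.ofReal Lr * ENNReal.ofReal (1/Lr) = 1 := by
      rw [← ENNReal.ofReal_mul hLpos.le, mul_one_div_cancel hLpos.ne', ENNReal.ofReal_one]
    have he4 : ENNReal.ofReal (Real.exp 1) ≤ 4 := by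
      calc ENNReal.ofReal (Real.exp 1) ≤ ENNReal.ofReal 4 :=
            ENNReal.ofReal_le_ofReal (by nlinarith [Real.exp_one_lt_d9])
        _ = 4 := by norm_num
    set T := (∑' k : ℕ, ENNReal.ofReal (|a k| ^ p)) ^ (1/p) with hT
    calc ∑ j ∈ Finset.range (n+1), mu Measure.count a (j:ℝ)
        ≤ ((n:ℝ≥0∞)+1) ^ (1/q) * T := hhold
      _ ≤ ENNReal.ofReal (Real.exp 1) * T := mul_le_mul_left hnq T
      _ ≤ 4 * T := mul_le_mul_left he4 T
      _ = 4 * ((ENNReal.ofReal Lr * ENNReal.ofReal (1/Lr)) * T) := by rw [hLL, one_mul]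
      _ = 4 * (ENNReal.ofReal Lr * (ENNReal.ofReal (1/Lr) * T)) := by rw [mul_assoc]
      _ ≤ 4 * (ENNReal.ofReal Lr * S) := mul_le_mul_right (mul_le_mul_right hTle _) _
      _ = 4 * S * ENNReal.ofReal Lr := by ring

end StmtAux

/-- There is an absolute constant `c ≥ 1` such that for every sequence `a = (a_k)_{k ≥ 0}`,
`c⁻¹ ‖a‖_{m_log} ≤ sup_{1 < p ≤ 2} (p-1) (∑_k |a_k|^p)^{1/p} ≤ c ‖a‖_{m_log}`, where
`‖a‖_{m_log} = sup_n (log(n+2))⁻¹ ∑_{j=0}^n μ(j,a)`. -/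
theorem stmt_3 :
    ∃ c : ℝ≥0∞, 1 ≤ c ∧ c ≠ ⊤ ∧ ∀ a : ℕ → ℝ,
      c⁻¹ * (⨆ n : ℕ, (∑ j ∈ Finset.range (n+1), mu Measure.count a (j : ℝ)) /
          ENNReal.ofReal (Real.log ((n : ℝ) + 2))) ≤
        (⨆ (p : ℝ) (_ : 1 < p) (_ : p ≤ 2),
          ENNReal.ofReal (p - 1) * (∑' k : ℕ, ENNReal.ofReal (|a k| ^ p)) ^ (1/p)) ∧
      (⨆ (p : ℝ) (_ : 1 < p) (_ : p ≤ 2),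
          ENNReal.ofReal (p - 1) * (∑' k : ℕ, ENNReal.ofReal (|a k| ^ p)) ^ (1/p)) ≤
        c * ⨆ n : ℕ, (∑ j ∈ Finset.range (n+1), mu Measure.count a (j : ℝ)) /
          ENNReal.ofReal (Real.log ((n : ℝ) + 2)) := by
  refine ⟨4, by norm_num, by norm_num, fun a => ⟨?_, ?_⟩⟩
  · have hM : (⨆ n : ℕ, (∑ j ∈ Finset.range (n+1), mu Measure.count a (j : ℝ)) /
        ENNReal.ofReal (Real.log ((n : ℝ) + 2)))
        ≤ 4 * ⨆ (p : ℝ) (_ : 1 < p) (_ : p ≤ 2),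
            ENNReal.ofReal (p - 1) * (∑' k : ℕ, ENNReal.ofReal (|a k| ^ p)) ^ (1/p) :=
      iSup_le fun n => StmtAux.direction1 a n
    calc (4:ℝ≥0∞)⁻¹ * (⨆ n : ℕ, (∑ j ∈ Finset.range (n+1), mu Measure.count a (j : ℝ)) /
            ENNReal.ofReal (Real.log ((n : ℝ) + 2)))
        ≤ 4⁻¹ * (4 * ⨆ (p : ℝ) (_ : 1 < p) (_ : p ≤ 2),
            ENNReal.ofReal (p - 1) * (∑' k : ℕ, ENNReal.ofReal (|a k| ^ p)) ^ (1/p)) :=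
          mul_le_mul_right hM _
      _ = ((4:ℝ≥0∞)⁻¹ * 4) * ⨆ (p : ℝ) (_ : 1 < p) (_ : p ≤ 2),
            ENNReal.ofReal (p - 1) * (∑' k : ℕ, ENNReal.ofReal (|a k| ^ p)) ^ (1/p) :=
          (mul_assoc _ _ _).symm
      _ = ⨆ (p : ℝ) (_ : 1 < p) (_ : p ≤ 2),
            ENNReal.ofReal (p - 1) * (∑' k : ℕ, ENNReal.ofReal (|a k| ^ p)) ^ (1/p) := by
          rw [ENNReal.inv_mul_cancel (by norm_num) (by norm_num), one_mul]
  · exact iSup_le fun p => iSup_le fun h1 => iSup_le fun h2 => StmtAux.direction2 a h1 h2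
end

section
/- Suppose T satisfies the First Extrapolation Condition (commutative form). Then there is an absolute constant c > 0 such that for every x ∈ (L₁ ∩ L∞)(X,ν), sup_{t>0} (1/φ(t)) ∫_0^t μ(s,Tx) ds ≤ c · max{‖x‖₁, ‖x‖_∞}; that is, T maps (L₁ ∩ L∞)(X,ν) boundedly into the Marcinkiewicz space M_φ(Y,ω) with an absolute bound. -/
open MeasureTheory ENNReal Set

universe u v

/-- The concave function `φ(t) = t log(e²/t)` for `0 < t ≤ 1`, `φ(t) = log(e² t)` for `t > 1`. -/
noncomputable def phi (t : ℝ) : ℝ :=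
  if t ≤ 1 then t * Real.log (Real.exp 2 / t) else Real.log (Real.exp 2 * t)

lemma aux_vol_le (a : ℝ≥0∞) : volume {σ : ℝ | 0 < σ ∧ ENNReal.ofReal σ < a} ≤ a := by
  rcases eq_or_ne a ⊤ with h | h
  · simp [h]
  · calc volume {σ : ℝ | 0 < σ ∧ ENNReal.ofReal σ < a} ≤ volume (Ioo (0:ℝ) a.toReal) := by
          apply measure_mono
          rintro σ ⟨h1, h2⟩
          exact ⟨h1, (ENNReal.ofReal_lt_iff_lt_toReal h1.le h).mp h2⟩
      _ ≤ a := by rw [Real.volume_Ioo, sub_zero]; exact ENNReal.ofReal_toReal_le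

section
variable {Y : Type*} [MeasurableSpace Y] (ω : Measure Y) (f : Y → ℝ)

lemma aux_d_anti : Antitone (fun σ : ℝ => ω {u | σ < |f u|}) :=
  fun _ _ hab => measure_mono (fun _ hu => lt_of_le_of_lt hab hu)

lemma aux_mu_le_vol (s : ℝ) :
    mu ω f s ≤ volume {σ : ℝ | 0 < σ ∧ ENNReal.ofReal s < ω {u | σ < |f u|}} := by
  set A := {σ : ℝ | 0 < σ ∧ ENNReal.ofReal s < ω {u | σ < |f u|}} with hA
  have key : ∀ b : ℝ, 0 < b → volume A < ENNReal.ofReal b → mu ω f s ≤ ENNReal.ofReal b := by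
    intro b hb hvb
    have hbA : b ∉ A := by
      intro hbA
      have hsub : Ioo 0 b ⊆ A := by
        rintro σ ⟨h1, h2⟩
        refine ⟨h1, lt_of_lt_of_le hbA.2 (measure_mono (fun u hu => lt_trans h2 hu))⟩
      have : ENNReal.ofReal b ≤ volume A := by
        calc ENNReal.ofReal b = volume (Ioo 0 b) := by rw [Real.volume_Ioo, sub_zero]
          _ ≤ volume A := measure_mono hsub
      exact absurd (lt_of_le_of_lt this hvb) (lt_irrefl _)
    have hd : ω {u | b < |f u|} ≤ ENNReal.ofReal s := by
      by_contra hc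
      exact hbA ⟨hb, not_le.mp hc⟩
    exact sInf_le ⟨b, ⟨hb.le, hd⟩, rfl⟩
  rcases eq_or_ne (volume A) ⊤ with h | h
  · simp [h]
  · apply ENNReal.le_of_forall_pos_le_add
    intro ε hε _
    have h1 : volume A < ENNReal.ofReal ((volume A).toReal + ε) := by
      rw [ENNReal.ofReal_add ENNReal.toReal_nonneg (le_of_lt (by exact_mod_cast hε)),
        ENNReal.ofReal_toReal h]
      refine ENNReal.lt_add_right h ?_
      simpa using hε.ne'
    have h2 : (0:ℝ) < (volume A).toReal + ε :=
      add_pos_of_nonneg_of_pos ENNReal.toReal_nonneg (by exact_mod_cast hε)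
    have := key _ h2 h1
    rwa [ENNReal.ofReal_add ENNReal.toReal_nonneg (le_of_lt (by exact_mod_cast hε)),
      ENNReal.ofReal_toReal h, ENNReal.ofReal_coe_nnreal] at this

lemma aux_swap (t σ0 : ℝ) (hσ0 : 0 < σ0) :
    ∫⁻ s in Ioc (0:ℝ) t, mu ω f s ≤
      ENNReal.ofReal t * ENNReal.ofReal σ0 + ∫⁻ σ in Ioi σ0, ω {u | σ < |f u|} := by
  set d : ℝ → ℝ≥0∞ := fun σ => ω {u | σ < |f u|} with hd
  have hdm : Measurable d := Antitone.measurable (aux_d_anti ω f)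
  have hS : MeasurableSet {q : ℝ × ℝ | ENNReal.ofReal q.1 < d q.2} :=
    measurableSet_lt (ENNReal.measurable_ofReal.comp measurable_fst) (hdm.comp measurable_snd)
  have hmble : Measurable fun q : ℝ × ℝ =>
      ({q : ℝ × ℝ | ENNReal.ofReal q.1 < d q.2}).indicator (1 : ℝ×ℝ → ℝ≥0∞) q :=
    measurable_one.indicator hS
  have step1 : ∀ s : ℝ, mu ω f s ≤
      ∫⁻ σ in Ioi (0:ℝ), ({q : ℝ × ℝ | ENNReal.ofReal q.1 < d q.2}).indicator
        (1 : ℝ×ℝ → ℝ≥0∞) (s, σ) := by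
    intro s
    have : (fun σ : ℝ => ({q : ℝ × ℝ | ENNReal.ofReal q.1 < d q.2}).indicator
        (1 : ℝ×ℝ → ℝ≥0∞) (s, σ)) = ({σ : ℝ | ENNReal.ofReal s < d σ}).indicator
        (1 : ℝ → ℝ≥0∞) := by
      ext σ
      by_cases h : ENNReal.ofReal s < d σ <;>
        simp [Set.indicator_apply, h]
    rw [this, lintegral_indicator_one (measurableSet_lt measurable_const hdm)]
    rw [Measure.restrict_apply (measurableSet_lt measurable_const hdm)]
    refine (aux_mu_le_vol ω f s).trans (le_of_eq ?_)
    congr 1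
    ext σ
    simp only [mem_inter_iff, mem_setOf_eq, mem_Ioi]
    tauto
  calc ∫⁻ s in Ioc (0:ℝ) t, mu ω f s
      ≤ ∫⁻ s in Ioc (0:ℝ) t, ∫⁻ σ in Ioi (0:ℝ),
          ({q : ℝ × ℝ | ENNReal.ofReal q.1 < d q.2}).indicator (1 : ℝ×ℝ → ℝ≥0∞) (s, σ) :=
        lintegral_mono step1
    _ = ∫⁻ σ in Ioi (0:ℝ), ∫⁻ s in Ioc (0:ℝ) t,
          ({q : ℝ × ℝ | ENNReal.ofReal q.1 < d q.2}).indicator (1 : ℝ×ℝ → ℝ≥0∞) (s, σ) := by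
        apply lintegral_lintegral_swap
        exact hmble.aemeasurable
    _ ≤ ∫⁻ σ in Ioi (0:ℝ), min (ENNReal.ofReal t) (d σ) := by
        apply lintegral_mono
        intro σ
        dsimp only
        have : (fun s : ℝ => ({q : ℝ × ℝ | ENNReal.ofReal q.1 < d q.2}).indicator
            (1 : ℝ×ℝ → ℝ≥0∞) (s, σ)) = ({s : ℝ | ENNReal.ofReal s < d σ}).indicator
            (1 : ℝ → ℝ≥0∞) := by
          ext s
          by_cases h : ENNReal.ofReal s < d σ <;> simp [Set.indicator_apply, h]
        rw [this, lintegral_indicator_one (measurableSet_lt ENNReal.measurable_ofReal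
          measurable_const), Measure.restrict_apply (measurableSet_lt
          ENNReal.measurable_ofReal measurable_const)]
        refine le_min ?_ ?_
        · refine (measure_mono inter_subset_right).trans (le_of_eq ?_)
          rw [Real.volume_Ioc, sub_zero]
        · refine (measure_mono ?_).trans (aux_vol_le (d σ))
          rintro s ⟨h1, h2, _⟩
          exact ⟨h2, h1⟩
    _ = (∫⁻ σ in Ioc (0:ℝ) σ0, min (ENNReal.ofReal t) (d σ)) +
          ∫⁻ σ in Ioi σ0, min (ENNReal.ofReal t) (d σ) := by
        rw [← lintegral_union measurableSet_Ioi (Set.Ioc_disjoint_Ioi le_rfl),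
          Set.Ioc_union_Ioi_eq_Ioi hσ0.le]
    _ ≤ ENNReal.ofReal t * ENNReal.ofReal σ0 + ∫⁻ σ in Ioi σ0, d σ := by
        refine add_le_add ?_ (lintegral_mono fun σ => min_le_right _ _)
        refine (lintegral_mono fun σ => min_le_left _ _ : _ ≤ ∫⁻ _ in Ioc (0:ℝ) σ0,
          ENNReal.ofReal t).trans (le_of_eq ?_)
        rw [setLIntegral_const, Real.volume_Ioc, sub_zero]

lemma aux_tail (p σ0 : ℝ) (hp : 1 < p) (hσ0 : 0 < σ0) (hfm : AEMeasurable f ω) :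
    ∫⁻ σ in Ioi σ0, ω {u | σ < |f u|} ≤
      ENNReal.ofReal (σ0 ^ (1 - p)) * ∫⁻ u, ENNReal.ofReal (|f u| ^ p) ∂ω := by
  have hp0 : (0:ℝ) < p := by linarith
  have layer := lintegral_rpow_eq_lintegral_meas_lt_mul ω
      (ae_of_all _ fun u => abs_nonneg (f u)) (hfm.norm.congr (by simp [Real.norm_eq_abs])) hp0
  have key : ∫⁻ σ in Ioi σ0, ω {u | σ < |f u|} ≤ ENNReal.ofReal (σ0 ^ (1-p)) *
      ∫⁻ σ in Ioi (0:ℝ), ω {u | σ < |f u|} * ENNReal.ofReal (σ ^ (p-1)) := by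
    calc ∫⁻ σ in Ioi σ0, ω {u | σ < |f u|}
        ≤ ∫⁻ σ in Ioi σ0, ENNReal.ofReal (σ0 ^ (1-p)) *
            (ω {u | σ < |f u|} * ENNReal.ofReal (σ ^ (p-1))) := by
          apply lintegral_mono_ae
          filter_upwards [self_mem_ae_restrict (measurableSet_Ioi : MeasurableSet (Ioi σ0))]
          intro σ hσ
          have hσ0' : σ0 ≤ σ := (mem_Ioi.mp hσ).le
          have h1 : (1:ℝ≥0∞) ≤ ENNReal.ofReal (σ0 ^ (1-p)) * ENNReal.ofReal (σ ^ (p-1)) := by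
            rw [← ENNReal.ofReal_mul (Real.rpow_nonneg hσ0.le _)]
            apply ENNReal.one_le_ofReal.mpr
            rw [show (1-p) = -(p-1) by ring, Real.rpow_neg hσ0.le]
            rw [inv_mul_eq_div, le_div_iff₀ (Real.rpow_pos_of_pos hσ0 _), one_mul]
            exact Real.rpow_le_rpow hσ0.le hσ0' (by linarith)
          calc ω {u | σ < |f u|} ≤ (ENNReal.ofReal (σ0 ^ (1-p)) * ENNReal.ofReal (σ ^ (p-1))) *
                ω {u | σ < |f u|} := le_mul_of_one_le_left zero_le h1
            _ = ENNReal.ofReal (σ0 ^ (1-p)) * (ω {u | σ < |f u|} * ENNReal.ofReal (σ ^ (p-1))) := by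
                ring
      _ = ENNReal.ofReal (σ0 ^ (1-p)) *
            ∫⁻ σ in Ioi σ0, ω {u | σ < |f u|} * ENNReal.ofReal (σ ^ (p-1)) :=
          lintegral_const_mul' _ _ ENNReal.ofReal_ne_top
      _ ≤ _ := by
          gcongr
  have hX : ∫⁻ σ in Ioi (0:ℝ), ω {u | σ < |f u|} * ENNReal.ofReal (σ ^ (p-1))
      ≤ ∫⁻ u, ENNReal.ofReal (|f u| ^ p) ∂ω := by
    rw [layer]
    exact le_mul_of_one_le_left zero_le (ENNReal.one_le_ofReal.mpr hp.le)
  exact key.trans (mul_le_mul_right hX _)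
end

lemma aux_interp {X : Type*} [MeasurableSpace X] {ν : Measure X} (x : X → ℝ) {p : ℝ}
    (hp : 1 < p) :
    eLpNorm x (ENNReal.ofReal p) ν ≤ max (eLpNorm x 1 ν) (eLpNorm x ∞ ν) := by
  set M := max (eLpNorm x 1 ν) (eLpNorm x ∞ ν) with hM
  rcases eq_or_ne M ⊤ with hMtop | hMtop
  · exact hMtop ▸ le_top
  have hp0 : (0:ℝ) < p := by linarith
  have hpne : ENNReal.ofReal p ≠ 0 := by
    simp [ENNReal.ofReal_eq_zero, not_le, hp0]
  have htoReal : (ENNReal.ofReal p).toReal = p := ENNReal.toReal_ofReal hp0.le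
  rw [eLpNorm_eq_lintegral_rpow_enorm_toReal hpne ENNReal.ofReal_ne_top, htoReal]
  have hae : ∀ᵐ u ∂ν, (‖x u‖₊ : ℝ≥0∞) ≤ M := by
    filter_upwards [enorm_ae_le_eLpNormEssSup x ν] with u hu
    exact hu.trans ((le_of_eq eLpNorm_exponent_top.symm).trans (le_max_right _ _))
  have hbound : ∫⁻ u, (‖x u‖₊ : ℝ≥0∞) ^ p ∂ν ≤ M ^ p := by
    calc ∫⁻ u, (‖x u‖₊ : ℝ≥0∞) ^ p ∂ν ≤ ∫⁻ u, M ^ (p-1) * (‖x u‖₊ : ℝ≥0∞) ∂ν := by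
          apply lintegral_mono_ae
          filter_upwards [hae] with u hu
          calc (‖x u‖₊ : ℝ≥0∞) ^ p = (‖x u‖₊ : ℝ≥0∞) ^ (p-1) * (‖x u‖₊ : ℝ≥0∞) ^ (1:ℝ) := by
                rw [← ENNReal.rpow_add_of_nonneg _ _ (by linarith) zero_le_one]
                norm_num
            _ ≤ M ^ (p-1) * (‖x u‖₊ : ℝ≥0∞) := by
                rw [ENNReal.rpow_one]
                exact mul_le_mul_left (ENNReal.rpow_le_rpow hu (by linarith)) _
      _ = M ^ (p-1) * ∫⁻ u, (‖x u‖₊ : ℝ≥0∞) ∂ν :=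
          lintegral_const_mul' _ _ (ENNReal.rpow_ne_top_of_nonneg (by linarith) hMtop)
      _ ≤ M ^ (p-1) * M ^ (1:ℝ) := by
          rw [ENNReal.rpow_one]
          exact mul_le_mul_right (le_of_eq eLpNorm_one_eq_lintegral_enorm.symm |>.trans
            (le_max_left _ _) : _ ≤ M) _
      _ = M ^ p := by
          rw [← ENNReal.rpow_add_of_nonneg _ _ (by linarith) zero_le_one]
          norm_num
  calc (∫⁻ u, (‖x u‖₊ : ℝ≥0∞) ^ p ∂ν) ^ (1/p) ≤ (M ^ p) ^ (1/p) :=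
        ENNReal.rpow_le_rpow hbound (by positivity)
    _ = M := by
        rw [← ENNReal.rpow_mul, mul_one_div_cancel hp0.ne', ENNReal.rpow_one]

lemma aux_exp_le : Real.exp 1 ≤ 3 := by
  have := Real.exp_one_lt_d9
  linarith

lemma aux_scalar {t : ℝ} (ht : 0 < t) :
    ∃ p : ℝ, 1 < p ∧ 2 * max p (p / (p - 1)) * t ^ (1 - 1 / p) ≤ 6 * phi t := by
  by_cases h : t ≤ 1
  · set p := 2 - Real.log t with hpdef
    have hlog : Real.log t ≤ 0 := Real.log_nonpos ht.le h
    have hp2 : 2 ≤ p := by simp only [hpdef]; linarith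
    have hp1 : 1 < p := by linarith
    have hp0 : 0 < p := by linarith
    refine ⟨p, hp1, ?_⟩
    have hmax : max p (p / (p - 1)) = p := by
      apply max_eq_left
      rw [div_le_iff₀ (by linarith : (0:ℝ) < p - 1)]
      nlinarith
    have hphi : phi t = t * p := by
      rw [phi, if_pos h, Real.log_div (Real.exp_ne_zero 2) ht.ne', Real.log_exp]
    have hsplit : t ^ (1 - 1 / p) = t * t ^ (-(1 / p)) := by
      rw [show 1 - 1/p = 1 + -(1/p) by ring, Real.rpow_add ht, Real.rpow_one]
    have hbound : t ^ (-(1 / p)) ≤ 3 := by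
      rw [Real.rpow_def_of_pos ht]
      calc Real.exp (Real.log t * -(1/p)) ≤ Real.exp 1 := by
            apply Real.exp_le_exp.mpr
            rw [mul_neg, ← neg_mul, ← div_eq_mul_one_div]
            rw [div_le_one hp0]
            simp only [hpdef]; linarith
        _ ≤ 3 := aux_exp_le
    rw [hmax, hphi, hsplit]
    have htp : (0:ℝ) ≤ t ^ (-(1/p)) := Real.rpow_nonneg ht.le _
    nlinarith [mul_le_mul_of_nonneg_left hbound (by positivity : (0:ℝ) ≤ 2 * p * t)]
  · push_neg at h
    have hlog : 0 < Real.log t := Real.log_pos h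
    set L := 2 + Real.log t with hLdef
    have hL2 : 2 < L := by simp only [hLdef]; linarith
    have hL1 : 0 < L - 1 := by linarith
    set p := L / (L - 1) with hpdef
    have hp1 : 1 < p := (one_lt_div hL1).mpr (by linarith)
    have hp0 : 0 < p := by linarith
    refine ⟨p, hp1, ?_⟩
    have hpL : p ≤ 2 := by
      rw [hpdef, div_le_iff₀ hL1]; linarith
    have hpp : p / (p - 1) = L := by
      rw [hpdef]
      field_simp
      ring
    have hmax : max p (p / (p - 1)) = L := by
      rw [hpp]; exact max_eq_right (by linarith)
    have hphi : phi t = L := by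
      rw [phi, if_neg (not_le.mpr h), Real.log_mul (Real.exp_ne_zero 2) ht.ne', Real.log_exp]
    have hexp : 1 - 1 / p = 1 / L := by
      rw [hpdef]
      field_simp
      ring
    have hbound : t ^ (1 / L) ≤ 3 := by
      rw [Real.rpow_def_of_pos ht]
      calc Real.exp (Real.log t * (1/L)) ≤ Real.exp 1 := by
            apply Real.exp_le_exp.mpr
            rw [← div_eq_mul_one_div, div_le_one (by linarith : (0:ℝ) < L)]
            linarith
        _ ≤ 3 := aux_exp_le
    rw [hmax, hphi, hexp]
    nlinarith

lemma aux_arith {a t p : ℝ} (ha : 0 < a) (ht : 0 < t) (hp : 1 < p) :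
    t * (a * t ^ (-(1 / p))) + (a * t ^ (-(1 / p))) ^ (1 - p) * a ^ p =
      2 * a * t ^ (1 - 1 / p) := by
  have htp : (0:ℝ) < t ^ (-(1/p)) := Real.rpow_pos_of_pos ht _
  have h1 : t * (a * t ^ (-(1/p))) = a * t ^ (1 - 1/p) := by
    rw [show 1 - 1/p = 1 + -(1/p) by ring, Real.rpow_add ht, Real.rpow_one]; ring
  have h2 : (a * t ^ (-(1/p))) ^ (1 - p) * a ^ p = a * t ^ (1 - 1/p) := by
    rw [Real.mul_rpow ha.le htp.le, ← Real.rpow_mul ht.le,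
      show -(1/p) * (1 - p) = 1 - 1/p by field_simp; ring]
    rw [show a ^ (1-p) * t ^ (1 - 1/p) * a ^ p = a ^ (1-p) * a ^ p * t ^ (1 - 1/p) by ring,
      ← Real.rpow_add ha]
    norm_num
  rw [h1, h2]; ring

/-- If `T` satisfies the First Extrapolation Condition (commutative form), then there is an
absolute constant `c > 0` such that for every `x ∈ L₁ ∩ L∞`,
`sup_{t>0} (1/φ(t)) ∫_0^t μ(s,Tx) ds ≤ c max{‖x‖₁, ‖x‖∞}`. -/
theorem stmt_9 :
    ∃ c : ℝ, 0 < c ∧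
      ∀ (X : Type u) (Y : Type v) [MeasurableSpace X] [MeasurableSpace Y]
        (ν : Measure X) (ω : Measure Y), SigmaFinite ν → SigmaFinite ω →
      ∀ T : (X → ℝ) → (Y → ℝ),
        (∀ x y : X → ℝ, MemLp x 1 ν → MemLp x ∞ ν → MemLp y 1 ν → MemLp y ∞ ν →
          T (x + y) =ᵐ[ω] T x + T y) →
        (∀ (a : ℝ) (x : X → ℝ), MemLp x 1 ν → MemLp x ∞ ν → T (a • x) =ᵐ[ω] a • T x) →
        (∀ p : ℝ, 1 < p → ∀ x : X → ℝ, MemLp x 1 ν → MemLp x ∞ ν →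
          MemLp (T x) (ENNReal.ofReal p) ω ∧
          eLpNorm (T x) (ENNReal.ofReal p) ω ≤
            ENNReal.ofReal (max p (p / (p - 1))) * eLpNorm x (ENNReal.ofReal p) ν) →
      ∀ x : X → ℝ, MemLp x 1 ν → MemLp x ∞ ν →
        (⨆ (t : ℝ) (_ : 0 < t),
            (∫⁻ s in Ioc (0:ℝ) t, mu ω (T x) s) / ENNReal.ofReal (phi t)) ≤
          ENNReal.ofReal c * max (eLpNorm x 1 ν) (eLpNorm x ∞ ν) := by
  refine ⟨6, by norm_num, ?_⟩
  intro X Y _ _ ν ω _ _ T _ _ hp3 x hx1 hxtop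
  set f := T x with hf
  set M := max (eLpNorm x 1 ν) (eLpNorm x ∞ ν) with hM
  have hMne : M ≠ ⊤ := (max_lt hx1.eLpNorm_lt_top hxtop.eLpNorm_lt_top).ne
  apply iSup_le
  intro t
  apply iSup_le
  intro ht
  by_cases hM0 : M = 0
  · -- x is a.e. zero, hence T x is a.e. zero and mu vanishes
    have hx0 : eLpNorm x (ENNReal.ofReal 2) ν = 0 := by
      have h1 : eLpNorm x 1 ν = 0 := le_antisymm (hM0 ▸ le_max_left _ _) zero_le
      have hx00 : x =ᵐ[ν] 0 := (eLpNorm_eq_zero_iff hx1.aestronglyMeasurable one_ne_zero).mp h1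
      exact (eLpNorm_eq_zero_iff (p := ENNReal.ofReal 2) hx1.aestronglyMeasurable (by simp)).mpr hx00
    obtain ⟨hfmem, hfbound⟩ := hp3 2 one_lt_two x hx1 hxtop
    have hf0 : f =ᵐ[ω] 0 := by
      refine (eLpNorm_eq_zero_iff (p := ENNReal.ofReal 2) hfmem.aestronglyMeasurable (by simp)).mp ?_
      refine le_antisymm ?_ zero_le
      calc eLpNorm f (ENNReal.ofReal 2) ω ≤ _ := hfbound
        _ = 0 := by rw [hx0, mul_zero]
    have hmu0 : ∀ s : ℝ, mu ω f s = 0 := by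
      intro s
      have hd0 : ω {u | 0 < |f u|} = 0 := by
        rw [measure_eq_zero_iff_ae_notMem]
        filter_upwards [hf0] with u hu
        simp [hu]
      refine le_antisymm ?_ zero_le
      have : mu ω f s ≤ ENNReal.ofReal 0 :=
        sInf_le ⟨0, ⟨le_rfl, by rw [hd0]; exact zero_le⟩, rfl⟩
      simpa using this
    have : ∫⁻ s in Ioc (0:ℝ) t, mu ω f s = 0 := by
      rw [show (fun s => mu ω f s) = (fun _ => (0:ℝ≥0∞)) from funext hmu0]
      simp
    rw [this, ENNReal.zero_div]
    exact zero_le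
  · -- main case
    set m := M.toReal with hm
    have hmpos : 0 < m := ENNReal.toReal_pos hM0 hMne
    obtain ⟨p, hp1, hscal⟩ := aux_scalar ht
    have hp0 : (0:ℝ) < p := by linarith
    set C : ℝ := max p (p / (p - 1)) with hC
    have hC1 : 1 ≤ C := le_trans hp1.le (le_max_left _ _)
    set a : ℝ := C * m with ha
    have hapos : 0 < a := by positivity
    set σ0 : ℝ := a * t ^ (-(1 / p)) with hσ0def
    have hσ0 : 0 < σ0 := by positivity
    obtain ⟨hfmem, hfbound⟩ := hp3 p hp1 x hx1 hxtop
    have hfm : AEMeasurable f ω := hfmem.aestronglyMeasurable.aemeasurable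
    -- the p-norm of f to the p-th power
    have hpne : ENNReal.ofReal p ≠ 0 := by simp [ENNReal.ofReal_eq_zero, not_le, hp0]
    have hNeq : ∫⁻ u, ENNReal.ofReal (|f u| ^ p) ∂ω = (eLpNorm f (ENNReal.ofReal p) ω) ^ p := by
      rw [eLpNorm_eq_lintegral_rpow_enorm_toReal hpne ENNReal.ofReal_ne_top,
        ENNReal.toReal_ofReal hp0.le, ← ENNReal.rpow_mul, one_div_mul_cancel hp0.ne',
        ENNReal.rpow_one]
      apply lintegral_congr
      intro u
      rw [← ENNReal.ofReal_rpow_of_nonneg (abs_nonneg _) hp0.le]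
      congr 1
      rw [← Real.norm_eq_abs, ofReal_norm]
    have hNle : ∫⁻ u, ENNReal.ofReal (|f u| ^ p) ∂ω ≤ ENNReal.ofReal (a ^ p) := by
      rw [hNeq, ← ENNReal.ofReal_rpow_of_nonneg hapos.le hp0.le]
      apply ENNReal.rpow_le_rpow _ hp0.le
      calc eLpNorm f (ENNReal.ofReal p) ω
          ≤ ENNReal.ofReal C * eLpNorm x (ENNReal.ofReal p) ν := hfbound
        _ ≤ ENNReal.ofReal C * M := mul_le_mul_right (aux_interp x hp1) _
        _ = ENNReal.ofReal C * ENNReal.ofReal m := by rw [hm, ENNReal.ofReal_toReal hMne]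
        _ = ENNReal.ofReal a := (ENNReal.ofReal_mul (by linarith)).symm
    -- main estimate
    have main : ∫⁻ s in Ioc (0:ℝ) t, mu ω f s ≤ ENNReal.ofReal (6 * m * phi t) := by
      calc ∫⁻ s in Ioc (0:ℝ) t, mu ω f s
          ≤ ENNReal.ofReal t * ENNReal.ofReal σ0 + ∫⁻ σ in Ioi σ0, ω {u | σ < |f u|} :=
            aux_swap ω f t σ0 hσ0
        _ ≤ ENNReal.ofReal t * ENNReal.ofReal σ0 +
              ENNReal.ofReal (σ0 ^ (1 - p)) * ∫⁻ u, ENNReal.ofReal (|f u| ^ p) ∂ω :=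
            add_le_add_right (aux_tail ω f p σ0 hp1 hσ0 hfm) _
        _ ≤ ENNReal.ofReal t * ENNReal.ofReal σ0 +
              ENNReal.ofReal (σ0 ^ (1 - p)) * ENNReal.ofReal (a ^ p) :=
            add_le_add_right (mul_le_mul_right hNle _) _
        _ = ENNReal.ofReal (t * σ0 + σ0 ^ (1 - p) * a ^ p) := by
            rw [← ENNReal.ofReal_mul ht.le, ← ENNReal.ofReal_mul (Real.rpow_nonneg hσ0.le _),
              ← ENNReal.ofReal_add (by positivity) (by positivity)]
        _ = ENNReal.ofReal (2 * a * t ^ (1 - 1 / p)) := by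
            rw [hσ0def]; rw [aux_arith hapos ht hp1]
        _ ≤ ENNReal.ofReal (6 * m * phi t) := by
            apply ENNReal.ofReal_le_ofReal
            calc 2 * a * t ^ (1 - 1/p) = (2 * C * t ^ (1 - 1/p)) * m := by rw [ha]; ring
              _ ≤ (6 * phi t) * m := mul_le_mul_of_nonneg_right hscal hmpos.le
              _ = 6 * m * phi t := by ring
    -- conclude
    apply ENNReal.div_le_of_le_mul
    calc ∫⁻ s in Ioc (0:ℝ) t, mu ω f s ≤ ENNReal.ofReal (6 * m * phi t) := main
      _ = (ENNReal.ofReal 6 * M) * ENNReal.ofReal (phi t) := by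
          rw [show 6 * m * phi t = (6 * m) * phi t by ring,
            ENNReal.ofReal_mul (by positivity), ENNReal.ofReal_mul (by norm_num),
            hm, ENNReal.ofReal_toReal hMne]
end

section
/- Let g : (0,∞) → [0,∞] be a nonincreasing measurable function. Then for every t > 0, (1/t) ∫_0^t g(s)² ds + ( ∫_t^∞ g(s)/s ds )² ≤ (2/t) ∫_0^t ( ∫_s^∞ g(u)/u du )² ds, with all quantities taking values in [0,∞]. (Equivalently, C g² + (C* g)² ≤ 2 C((C* g)²) pointwise on (0,∞).) -/
open MeasureTheory ENNReal Set

/-- Tonelli swap over the triangle `{(s,v) : 0 < s < v ≤ t}`. -/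
lemma tri_swap (t : ℝ) (F : ℝ → ℝ → ℝ≥0∞) (hF : Measurable (Function.uncurry F)) :
    ∫⁻ s in Ioc (0:ℝ) t, ∫⁻ v in Ioc s t, F s v =
      ∫⁻ v in Ioc (0:ℝ) t, ∫⁻ s in Ioo 0 v, F s v := by
  set J : ℝ → ℝ → ℝ≥0∞ := fun s v => if 0 < s ∧ s < v ∧ v ≤ t then F s v else 0 with hJ
  have hS : MeasurableSet {p : ℝ × ℝ | 0 < p.1 ∧ p.1 < p.2 ∧ p.2 ≤ t} := by
    apply MeasurableSet.inter
    · exact measurableSet_lt measurable_const measurable_fst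
    · exact (measurableSet_lt measurable_fst measurable_snd).inter
        (measurableSet_le measurable_snd measurable_const)
  have hJm : Measurable (Function.uncurry J) := by
    have : Function.uncurry J = fun p : ℝ × ℝ =>
        if 0 < p.1 ∧ p.1 < p.2 ∧ p.2 ≤ t then Function.uncurry F p else 0 := rfl
    rw [this]
    exact Measurable.ite hS hF measurable_const
  have key := lintegral_lintegral_swap (μ := volume) (ν := volume) hJm.aemeasurable
  have hL : ∫⁻ s, ∫⁻ v, J s v = ∫⁻ s in Ioc (0:ℝ) t, ∫⁻ v in Ioc s t, F s v := by
    rw [← lintegral_indicator measurableSet_Ioc]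
    congr 1; funext s
    by_cases hs : s ∈ Ioc (0:ℝ) t
    · rw [indicator_of_mem hs]
      have : J s = (Ioc s t).indicator (F s) := by
        funext v
        by_cases hv : v ∈ Ioc s t
        · rw [indicator_of_mem hv]; exact if_pos ⟨hs.1, hv.1, hv.2⟩
        · rw [indicator_of_notMem hv]
          exact if_neg fun hc => hv ⟨hc.2.1, hc.2.2⟩
      rw [this, lintegral_indicator measurableSet_Ioc]
    · rw [indicator_of_notMem hs]
      have : J s = fun _ => 0 := by
        funext v
        refine if_neg fun hc => hs ⟨hc.1, le_trans hc.2.1.le hc.2.2⟩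
      rw [this, lintegral_const, zero_mul]
  have hR : ∫⁻ v, ∫⁻ s, J s v = ∫⁻ v in Ioc (0:ℝ) t, ∫⁻ s in Ioo 0 v, F s v := by
    rw [← lintegral_indicator measurableSet_Ioc]
    congr 1; funext v
    by_cases hv : v ∈ Ioc (0:ℝ) t
    · rw [indicator_of_mem hv]
      have : (fun s => J s v) = (Ioo (0:ℝ) v).indicator (fun s => F s v) := by
        funext s
        by_cases hs : s ∈ Ioo (0:ℝ) v
        · rw [indicator_of_mem hs]; exact if_pos ⟨hs.1, hs.2, hv.2⟩
        · rw [indicator_of_notMem hs]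
          exact if_neg fun hc => hs ⟨hc.1, hc.2.1⟩
      rw [this, lintegral_indicator measurableSet_Ioo]
    · rw [indicator_of_notMem hv]
      have : (fun s => J s v) = fun _ => 0 := by
        funext s
        refine if_neg fun hc => hv ⟨lt_trans hc.1 hc.2.1, hc.2.2⟩
      rw [this, lintegral_const, zero_mul]
  rw [← hL, ← hR, key]

/-- For a nonincreasing measurable `g : (0,∞) → [0,∞]` and every `t > 0`,
`(1/t) ∫_0^t g(s)² ds + (∫_t^∞ g(s)/s ds)² ≤ (2/t) ∫_0^t (∫_s^∞ g(u)/u du)² ds`;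
equivalently, `C g² + (C* g)² ≤ 2 C((C* g)²)` pointwise on `(0,∞)`. -/
theorem stmt_14 (g : ℝ → ℝ≥0∞) (hg : Measurable g) (hmono : AntitoneOn g (Ioi 0))
    (t : ℝ) (ht : 0 < t) :
    (∫⁻ s in Ioc (0:ℝ) t, (g s)^2) / ENNReal.ofReal t +
        (∫⁻ s in Ioi t, g s / ENNReal.ofReal s)^2 ≤
      2 * ((∫⁻ s in Ioc (0:ℝ) t, (∫⁻ u in Ioi s, g u / ENNReal.ofReal u)^2) /
        ENNReal.ofReal t) := by
  set f : ℝ → ℝ≥0∞ := fun v => g v / ENNReal.ofReal v with hf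
  have hfm : Measurable f := hg.div ENNReal.measurable_ofReal
  set h : ℝ → ℝ≥0∞ := fun s => ∫⁻ u in Ioi s, f u with hh
  set K : ℝ → ℝ≥0∞ := fun s => ∫⁻ v in Ioc s t, f v with hK
  have hKanti : Antitone K := fun a b hab => lintegral_mono_set (Ioc_subset_Ioc_left hab)
  have hKm : Measurable K := hKanti.measurable
  have hhanti : Antitone h := fun a b hab => lintegral_mono_set (Ioi_subset_Ioi hab)
  have hKh : ∀ s, K s ≤ h s := fun s => lintegral_mono_set Ioc_subset_Ioi_self
  set T := ENNReal.ofReal t with hT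
  have hT0 : T ≠ 0 := by simp [hT, ht]
  have hTtop : T ≠ ⊤ := ofReal_ne_top
  set A := ∫⁻ s in Ioc (0:ℝ) t, (g s)^2 with hA
  set C2 := ∫⁻ s in Ioc (0:ℝ) t, (h s)^2 with hC2
  -- step 1 : t * h(t)^2 ≤ C2
  have step1 : (h t)^2 * T ≤ C2 := by
    calc (h t)^2 * T = (h t)^2 * volume (Ioc (0:ℝ) t) := by
          rw [Real.volume_Ioc, sub_zero]
      _ = ∫⁻ _ in Ioc (0:ℝ) t, (h t)^2 := (setLIntegral_const _ _).symm
      _ ≤ C2 := setLIntegral_mono' measurableSet_Ioc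
          (fun s hs => pow_le_pow_left₀ zero_le (hhanti hs.2) 2)
  -- step 2 : A ≤ ∫ K^2 ≤ C2
  have innerbound : ∀ v ∈ Ioc (0:ℝ) t, ENNReal.ofReal v * g v ≤ ∫⁻ s in Ioo (0:ℝ) v, K s := by
    intro v hv
    have h1 : ∫⁻ s in Ioo (0:ℝ) v, (∫⁻ u in Ioc s v, f u) ≤ ∫⁻ s in Ioo (0:ℝ) v, K s := by
      refine setLIntegral_mono' measurableSet_Ioo fun s _ => ?_
      exact lintegral_mono_set (Ioc_subset_Ioc_right hv.2)
    refine le_trans ?_ h1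
    have h2 : ∫⁻ s in Ioo (0:ℝ) v, (∫⁻ u in Ioc s v, f u)
        = ∫⁻ s in Ioc (0:ℝ) v, (∫⁻ u in Ioc s v, f u) :=
      setLIntegral_congr Ioo_ae_eq_Ioc
    rw [h2, tri_swap v (fun _ u => f u) (hfm.comp measurable_snd)]
    have h3 : ∫⁻ u in Ioc (0:ℝ) v, (∫⁻ _ in Ioo (0:ℝ) u, f u)
        = ∫⁻ u in Ioc (0:ℝ) v, ENNReal.ofReal u * f u := by
      refine setLIntegral_congr_fun measurableSet_Ioc (fun u hu => ?_)
      rw [setLIntegral_const, Real.volume_Ioo, sub_zero, mul_comm]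
    rw [h3]
    have h4 : ∫⁻ u in Ioc (0:ℝ) v, ENNReal.ofReal u * f u = ∫⁻ u in Ioc (0:ℝ) v, g u := by
      refine setLIntegral_congr_fun measurableSet_Ioc (fun u hu => ?_)
      exact ENNReal.mul_div_cancel (by simp [hu.1]) ofReal_ne_top
    rw [h4]
    calc ENNReal.ofReal v * g v = g v * volume (Ioc (0:ℝ) v) := by
          rw [Real.volume_Ioc, sub_zero, mul_comm]
      _ = ∫⁻ _ in Ioc (0:ℝ) v, g v := (setLIntegral_const _ _).symm
      _ ≤ ∫⁻ u in Ioc (0:ℝ) v, g u := setLIntegral_mono' measurableSet_Ioc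
          (fun u hu => hmono hu.1 hv.1 hu.2)
  have step2 : A ≤ C2 := by
    have e1 : ∫⁻ s in Ioc (0:ℝ) t, (K s)^2
        = ∫⁻ s in Ioc (0:ℝ) t, ∫⁻ v in Ioc s t, K s * f v := by
      refine setLIntegral_congr_fun measurableSet_Ioc (fun s _ => ?_)
      rw [lintegral_const_mul _ hfm, sq]
    have e2 := tri_swap t (fun s v => K s * f v)
      ((hKm.comp measurable_fst).mul (hfm.comp measurable_snd))
    have e3 : ∫⁻ v in Ioc (0:ℝ) t, (∫⁻ s in Ioo (0:ℝ) v, K s * f v)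
        = ∫⁻ v in Ioc (0:ℝ) t, (∫⁻ s in Ioo (0:ℝ) v, K s) * f v := by
      refine setLIntegral_congr_fun measurableSet_Ioc (fun v _ => ?_)
      rw [lintegral_mul_const _ hKm]
    have e4 : A ≤ ∫⁻ v in Ioc (0:ℝ) t, (∫⁻ s in Ioo (0:ℝ) v, K s) * f v := by
      refine setLIntegral_mono' measurableSet_Ioc fun v hv => ?_
      have : (g v)^2 = (ENNReal.ofReal v * g v) * f v := by
        rw [mul_comm (ENNReal.ofReal v) (g v), mul_assoc,
          ENNReal.mul_div_cancel (by simp [hv.1]) ofReal_ne_top, sq]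
      rw [this]
      exact mul_le_mul_left (innerbound v hv) _
    calc A ≤ ∫⁻ v in Ioc (0:ℝ) t, (∫⁻ s in Ioo (0:ℝ) v, K s) * f v := e4
      _ = ∫⁻ s in Ioc (0:ℝ) t, (K s)^2 := by rw [e1, e2, e3]
      _ ≤ C2 := setLIntegral_mono' measurableSet_Ioc
          (fun s _ => pow_le_pow_left₀ zero_le (hKh s) 2)
  have key : A + (h t)^2 * T ≤ 2 * C2 := by
    rw [two_mul]; exact add_le_add step2 step1
  calc A / T + (h t)^2 = A / T + (h t)^2 * T / T := by
        rw [mul_div_assoc, ENNReal.div_self hT0 hTtop, mul_one]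
    _ = (A + (h t)^2 * T) / T := (ENNReal.add_div).symm
    _ ≤ (2 * C2) / T := ENNReal.div_le_div_right key _
    _ = 2 * (C2 / T) := by rw [mul_div_assoc]
end

section
/- Let (X,ν) be a σ-finite measure space and f : X → ℝ a measurable function with ∫_0^1 μ(s,f) ds < ∞ (i.e. f ∈ (L₁+L∞)(X,ν)). Let F be the measurable function on the product of (X,ν) with the positive integers equipped with counting measure, defined by F(u,k) = f(u)/k. Then for every t > 0, (1/2)·(1/t) ∫_0^t μ(s,f) ds ≤ μ(t,F) ≤ (1/t) ∫_0^t μ(s,f) ds; that is, (1/2)·C μ(f) ≤ μ(F) ≤ C μ(f) pointwise. -/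
open MeasureTheory ENNReal Set

namespace Stmt15Aux

instance : SFinite (Measure.count : Measure {k : ℕ // 0 < k}) := by
  unfold Measure.count; infer_instance

lemma mu_le {X : Type*} [MeasurableSpace X] (ν : Measure X) (f : X → ℝ) {s t : ℝ} (hs : 0 ≤ s)
    (h : ν {u | s < |f u|} ≤ ENNReal.ofReal t) : mu ν f t ≤ ENNReal.ofReal s :=
  sInf_le ⟨s, ⟨hs, h⟩, rfl⟩

lemma le_mu {X : Type*} [MeasurableSpace X] (ν : Measure X) (f : X → ℝ) {s t : ℝ}
    (h : ENNReal.ofReal t < ν {u | s < |f u|}) : ENNReal.ofReal s ≤ mu ν f t := by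
  refine le_sInf ?_
  rintro x ⟨s', ⟨hs', hν⟩, rfl⟩
  refine ENNReal.ofReal_le_ofReal ?_
  by_contra hc
  push_neg at hc
  have hsub : {u | s < |f u|} ⊆ {u | s' < |f u|} := fun u hu => lt_trans hc hu
  exact absurd (le_trans (measure_mono hsub) hν) (not_le.mpr h)

lemma min_add (t a b : ℝ≥0∞) : min t (a + b) ≤ min t a + min t b := by
  rcases le_total t a with h | h
  · calc min t (a + b) ≤ t := min_le_left _ _
      _ = min t a := (min_eq_left h).symm
      _ ≤ min t a + min t b := le_self_add
  · rcases le_total t b with h2 | h2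
    · calc min t (a + b) ≤ t := min_le_left _ _
        _ = min t b := (min_eq_left h2).symm
        _ ≤ min t a + min t b := le_add_self
    · calc min t (a + b) ≤ a + b := min_le_right _ _
        _ = min t a + min t b := by rw [min_eq_right h, min_eq_right h2]

lemma min_sum (t : ℝ≥0∞) (F : Finset ℕ) (a : ℕ → ℝ≥0∞) :
    min t (∑ k ∈ F, a k) ≤ ∑ k ∈ F, min t (a k) := by
  induction F using Finset.cons_induction with
  | empty => simp
  | cons k F hk ih =>
    rw [Finset.sum_cons, Finset.sum_cons]
    exact le_trans (min_add t _ _) (add_le_add le_rfl ih)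

lemma mem_of_lt_card {T : Finset ℕ} (hT : ∀ j k, j ≤ k → k ∈ T → j ∈ T) {k : ℕ}
    (hk : k < T.card) : k ∈ T := by
  by_contra hc
  have hsub : T ⊆ Finset.range k := by
    intro m hm
    refine Finset.mem_range.mpr (lt_of_not_ge fun h => hc (hT k m h hm))
  have := Finset.card_le_card hsub
  simp only [Finset.card_range] at this
  omega

lemma vol_le (a : ℝ≥0∞) (t : ℝ) : volume (Ioc 0 t ∩ {σ : ℝ | ENNReal.ofReal σ < a}) ≤ a := by
  rcases eq_or_ne a ⊤ with rfl | ha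
  · exact le_top
  have hsub : Ioc 0 t ∩ {σ : ℝ | ENNReal.ofReal σ < a} ⊆ Ioc 0 a.toReal := by
    rintro σ ⟨h1, h2⟩
    refine ⟨h1.1, le_of_lt ?_⟩
    rw [← ENNReal.ofReal_toReal ha] at h2
    exact (ENNReal.ofReal_lt_ofReal_iff_of_nonneg h1.1.le).mp h2
  calc volume (Ioc 0 t ∩ {σ : ℝ | ENNReal.ofReal σ < a}) ≤ volume (Ioc 0 a.toReal) :=
        measure_mono hsub
    _ = ENNReal.ofReal a.toReal := by rw [Real.volume_Ioc, sub_zero]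
    _ = a := ENNReal.ofReal_toReal ha

lemma le_vol {a : ℝ≥0∞} {t : ℝ} (ht : 0 < t) :
    min (ENNReal.ofReal t) a ≤ volume (Ioc 0 t ∩ {σ : ℝ | ENNReal.ofReal σ < a}) := by
  rcases le_total a (ENNReal.ofReal t) with h | h
  · rw [min_eq_right h]
    rcases eq_or_ne a 0 with rfl | ha0
    · exact zero_le
    have hat : a ≠ ⊤ := (lt_of_le_of_lt h ofReal_lt_top).ne
    have h1 : Ioo 0 a.toReal ⊆ Ioc 0 t ∩ {σ : ℝ | ENNReal.ofReal σ < a} := by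
      rintro σ ⟨hσ1, hσ2⟩
      have hσt : σ ≤ t := le_trans hσ2.le (ENNReal.toReal_le_of_le_ofReal ht.le h)
      refine ⟨⟨hσ1, hσt⟩, ?_⟩
      rw [← ENNReal.ofReal_toReal hat]
      exact (ENNReal.ofReal_lt_ofReal_iff_of_nonneg hσ1.le).mpr hσ2
    calc a = volume (Ioo 0 a.toReal) := by
          rw [Real.volume_Ioo, sub_zero, ENNReal.ofReal_toReal hat]
      _ ≤ _ := measure_mono h1
  · rw [min_eq_left h]
    have h1 : Ioo 0 t ⊆ Ioc 0 t ∩ {σ : ℝ | ENNReal.ofReal σ < a} := by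
      rintro σ ⟨hσ1, hσ2⟩
      exact ⟨⟨hσ1, hσ2.le⟩,
        lt_of_lt_of_le ((ENNReal.ofReal_lt_ofReal_iff_of_nonneg hσ1.le).mpr hσ2) h⟩
    calc ENNReal.ofReal t = volume (Ioo 0 t) := by rw [Real.volume_Ioo, sub_zero]
      _ ≤ _ := measure_mono h1

def natEquiv : ℕ ≃ {k : ℕ // 0 < k} where
  toFun n := ⟨n + 1, Nat.succ_pos n⟩
  invFun k := k.1 - 1
  left_inv n := by simp
  right_inv k := Subtype.ext (Nat.succ_pred_eq_of_pos k.2)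

lemma dF {X : Type*} [MeasurableSpace X] (ν : Measure X) [SigmaFinite ν] (f : X → ℝ)
    (hf : Measurable f) (s : ℝ) :
    (ν.prod (Measure.count : Measure {k : ℕ // 0 < k}))
        {p : X × {k : ℕ // 0 < k} | s < |f p.1 / ((p.2 : ℕ) : ℝ)|}
      = ∑' k : ℕ, ν {u | ((k : ℝ) + 1) * s < |f u|} := by
  have h2 : Measurable (fun p : X × {k : ℕ // 0 < k} => ((p.2 : ℕ) : ℝ)) :=
    (measurable_of_countable (fun k : {k : ℕ // 0 < k} => ((k : ℕ) : ℝ))).comp measurable_snd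
  have hm : MeasurableSet {p : X × {k : ℕ // 0 < k} | s < |f p.1 / ((p.2 : ℕ) : ℝ)|} :=
    measurableSet_lt measurable_const ((hf.comp measurable_fst).div h2).abs
  rw [Measure.prod_apply_symm hm, lintegral_count, ← Equiv.tsum_eq natEquiv]
  refine tsum_congr fun n => ?_
  congr 1
  ext u
  simp only [mem_preimage, mem_setOf_eq, natEquiv, Equiv.coe_fn_mk]
  have hn : (0 : ℝ) < (n : ℝ) + 1 := by positivity
  push_cast
  rw [abs_div, abs_of_pos hn, lt_div_iff₀ hn, mul_comm]

end Stmt15Aux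

open Stmt15Aux

/-- Commutative case of Lemma 6.3: for `f ∈ (L₁+L∞)(X,ν)` and
`F(u,k) = f(u)/k` on the product of `(X,ν)` with the positive integers with counting
measure, one has `(1/2) Cμ(f) ≤ μ(F) ≤ Cμ(f)` pointwise. -/
theorem stmt_15 {X : Type*} [MeasurableSpace X] (ν : Measure X) [SigmaFinite ν]
    (f : X → ℝ) (hf : Measurable f)
    (hL1Linf : (∫⁻ s in Ioc (0:ℝ) 1, mu ν f s) ≠ ⊤) :
    ∀ t : ℝ, 0 < t →
      2⁻¹ * ((∫⁻ s in Ioc (0:ℝ) t, mu ν f s) / ENNReal.ofReal t) ≤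
        mu (ν.prod (Measure.count : Measure {k : ℕ // 0 < k}))
          (fun p : X × {k : ℕ // 0 < k} => f p.1 / ((p.2 : ℕ) : ℝ)) t ∧
      mu (ν.prod (Measure.count : Measure {k : ℕ // 0 < k}))
          (fun p : X × {k : ℕ // 0 < k} => f p.1 / ((p.2 : ℕ) : ℝ)) t ≤
        (∫⁻ s in Ioc (0:ℝ) t, mu ν f s) / ENNReal.ofReal t := by
  intro t ht
  set I := ∫⁻ s in Ioc (0:ℝ) t, mu ν f s with hIdef
  set d : ℕ → ℝ → ℝ≥0∞ := fun k s => ν {u | ((k : ℝ) + 1) * s < |f u|} with hd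
  have htne : ENNReal.ofReal t ≠ 0 := (ENNReal.ofReal_pos.mpr ht).ne'
  -- Claim L
  have claimL : ∀ s : ℝ, 0 ≤ s → (∑' k : ℕ, d k s) ≤ ENNReal.ofReal t →
      I ≤ 2 * ENNReal.ofReal s * ENNReal.ofReal t := by
    intro s hs hD
    rcases eq_or_lt_of_le hs with rfl | hs'
    · -- s = 0
      have h0 : ν {u | (0:ℝ) < |f u|} = 0 := by
        by_contra hne
        have htop : (∑' _ : ℕ, ν {u | (0:ℝ) < |f u|}) = (⊤ : ℝ≥0∞) :=
          ENNReal.tsum_const_eq_top_of_ne_zero hne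
        have : (∑' k : ℕ, d k 0) = ⊤ := by
          simpa [hd, mul_zero] using htop
        rw [this] at hD
        exact absurd (lt_of_le_of_lt hD ofReal_lt_top) (lt_irrefl _)
      have hmu0 : ∀ σ ∈ Ioc (0:ℝ) t, mu ν f σ ≤ 0 := by
        intro σ hσ
        have := mu_le ν f (s := 0) (t := σ) le_rfl (by rw [h0]; exact zero_le)
        simpa using this
      have hI0 : I ≤ 0 := by
        calc I ≤ ∫⁻ _ in Ioc (0:ℝ) t, 0 := setLIntegral_mono measurable_const hmu0
          _ = 0 := lintegral_zero
      simp [le_antisymm hI0 zero_le]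
    · -- 0 < s
      set B : ℕ → Set ℝ := fun k => {σ : ℝ | ENNReal.ofReal σ < d k s} with hB
      have hBm : ∀ k, MeasurableSet (B k) :=
        fun k => measurableSet_lt ENNReal.measurable_ofReal measurable_const
      have hpt : ∀ σ ∈ Ioc (0:ℝ) t,
          mu ν f σ ≤ ENNReal.ofReal s + ∑' k : ℕ, (B k).indicator (fun _ => ENNReal.ofReal s) σ := by
        intro σ hσ
        have hfin : {k : ℕ | ENNReal.ofReal σ ≤ d k s}.Finite :=
          ENNReal.finite_const_le_of_tsum_ne_top
            (ne_top_of_le_ne_top ofReal_ne_top hD) (ENNReal.ofReal_pos.mpr hσ.1).ne'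
        have hSfin : {k : ℕ | σ ∈ B k}.Finite := by
          refine hfin.subset (fun k hk => ?_)
          simp only [Set.mem_setOf_eq] at hk ⊢
          exact hk.le
        set T := hSfin.toFinset with hT
        set c := T.card with hc
        have hmemT : ∀ k, k ∈ T ↔ ENNReal.ofReal σ < d k s := by
          intro k; rw [hT, Set.Finite.mem_toFinset]; rfl
        have hdc : ∀ j k, j ≤ k → k ∈ T → j ∈ T := by
          intro j k hjk hk
          rw [hmemT] at hk ⊢
          refine lt_of_lt_of_le hk (measure_mono fun u hu => ?_)
          simp only [Set.mem_setOf_eq] at hu ⊢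
          have hjk' : ((j : ℝ) + 1) ≤ (k : ℝ) + 1 := by exact_mod_cast Nat.succ_le_succ hjk
          exact lt_of_le_of_lt (mul_le_mul_of_nonneg_right hjk' hs) hu
        have hcnot : c ∉ T := by
          intro hcm
          have hsub : Finset.range (c + 1) ⊆ T := fun j hj =>
            hdc j c (Nat.lt_succ_iff.mp (Finset.mem_range.mp hj)) hcm
          have := Finset.card_le_card hsub
          simp only [Finset.card_range] at this
          omega
        have hdle : d c s ≤ ENNReal.ofReal σ := by
          by_contra hlt
          push_neg at hlt
          exact hcnot ((hmemT c).mpr hlt)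
        have h1 : mu ν f σ ≤ ENNReal.ofReal (((c : ℝ) + 1) * s) :=
          mu_le ν f (by positivity) hdle
        have h2 : (∑' k : ℕ, (B k).indicator (fun _ => ENNReal.ofReal s) σ)
            = c * ENNReal.ofReal s := by
          have hmemB : ∀ k, σ ∈ B k ↔ ENNReal.ofReal σ < d k s := fun k => Iff.rfl
          have h3 := tsum_eq_sum (L := SummationFilter.unconditional ℕ) (s := T)
            (f := fun k => (B k).indicator (fun _ => ENNReal.ofReal s) σ)
            (fun k hk => Set.indicator_of_notMem
              (fun hmem => hk ((hmemT k).mpr ((hmemB k).mp hmem))) _)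
          rw [h3, Finset.sum_congr rfl
            (fun k hk => Set.indicator_of_mem ((hmemB k).mpr ((hmemT k).mp hk)) _),
            Finset.sum_const, nsmul_eq_mul]
        rw [h2]
        calc mu ν f σ ≤ ENNReal.ofReal (((c : ℝ) + 1) * s) := h1
          _ = ENNReal.ofReal ((c : ℝ) + 1) * ENNReal.ofReal s := ENNReal.ofReal_mul (by positivity)
          _ = ((c : ℝ≥0∞) + 1) * ENNReal.ofReal s := by
              rw [ENNReal.ofReal_add (by positivity) zero_le_one, ENNReal.ofReal_natCast,
                ENNReal.ofReal_one]
          _ = ENNReal.ofReal s + (c : ℝ≥0∞) * ENNReal.ofReal s := by ring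
      have hmeas : Measurable (fun σ : ℝ =>
          ENNReal.ofReal s + ∑' k : ℕ, (B k).indicator (fun _ => ENNReal.ofReal s) σ) := by
        refine measurable_const.add (Measurable.ennreal_tsum fun k => ?_)
        exact Measurable.indicator measurable_const (hBm k)
      calc I ≤ ∫⁻ σ in Ioc (0:ℝ) t,
            (ENNReal.ofReal s + ∑' k : ℕ, (B k).indicator (fun _ => ENNReal.ofReal s) σ) :=
            setLIntegral_mono hmeas hpt
        _ = ENNReal.ofReal s * ENNReal.ofReal t
            + ∑' k : ℕ, ∫⁻ σ in Ioc (0:ℝ) t, (B k).indicator (fun _ => ENNReal.ofReal s) σ := by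
            rw [lintegral_add_left measurable_const, setLIntegral_const, Real.volume_Ioc,
              sub_zero, lintegral_tsum fun k =>
                ((measurable_const.indicator (hBm k)).aemeasurable)]
        _ ≤ ENNReal.ofReal s * ENNReal.ofReal t + ∑' k : ℕ, ENNReal.ofReal s * d k s := by
            refine add_le_add le_rfl (ENNReal.tsum_le_tsum fun k => ?_)
            rw [lintegral_indicator (hBm k), setLIntegral_const,
              Measure.restrict_apply (hBm k), Set.inter_comm]
            exact mul_le_mul_right (vol_le _ _) _
        _ ≤ ENNReal.ofReal s * ENNReal.ofReal t + ENNReal.ofReal s * ENNReal.ofReal t := by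
            rw [ENNReal.tsum_mul_left]
            exact add_le_add le_rfl (mul_le_mul_right hD _)
        _ = 2 * ENNReal.ofReal s * ENNReal.ofReal t := by ring
  -- Claim U
  have claimU : ∀ r : ℝ, 0 ≤ r → I < ENNReal.ofReal r * ENNReal.ofReal t →
      (∑' k : ℕ, d k r) ≤ ENNReal.ofReal t := by
    intro r hr hIr
    by_contra hDc
    push_neg at hDc
    obtain ⟨N, hN⟩ : ∃ N, ENNReal.ofReal t < ∑ k ∈ Finset.range N, d k r := by
      rw [ENNReal.tsum_eq_iSup_sum] at hDc
      obtain ⟨s0, hs0⟩ := lt_iSup_iff.mp hDc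
      obtain ⟨N, hsub⟩ := s0.exists_nat_subset_range
      exact ⟨N, lt_of_lt_of_le hs0 (Finset.sum_le_sum_of_subset hsub)⟩
    set A : ℕ → Set ℝ := fun k => {σ : ℝ | ENNReal.ofReal σ < d k r} with hA
    have hAm : ∀ k, MeasurableSet (A k) :=
      fun k => measurableSet_lt ENNReal.measurable_ofReal measurable_const
    have hpt : ∀ σ : ℝ,
        (∑ k ∈ Finset.range N, (A k).indicator (fun _ => ENNReal.ofReal r) σ) ≤ mu ν f σ := by
      intro σ
      set T := (Finset.range N).filter (fun k => σ ∈ A k) with hT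
      have hsum : (∑ k ∈ Finset.range N, (A k).indicator (fun _ => ENNReal.ofReal r) σ)
          = T.card * ENNReal.ofReal r := by
        rw [hT, ← Finset.sum_filter_add_sum_filter_not (Finset.range N) (fun k => σ ∈ A k)
          (fun k => (A k).indicator (fun _ => ENNReal.ofReal r) σ)]
        have e1 : ∀ k ∈ (Finset.range N).filter (fun k => σ ∈ A k),
            (A k).indicator (fun _ => ENNReal.ofReal r) σ = ENNReal.ofReal r := by
          intro k hk
          exact Set.indicator_of_mem (Finset.mem_filter.mp hk).2 _
        have e2 : ∀ k ∈ (Finset.range N).filter (fun k => ¬ σ ∈ A k),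
            (A k).indicator (fun _ => ENNReal.ofReal r) σ = 0 := by
          intro k hk
          exact Set.indicator_of_notMem (Finset.mem_filter.mp hk).2 _
        rw [Finset.sum_congr rfl e1, Finset.sum_congr rfl e2, Finset.sum_const,
          Finset.sum_const, nsmul_eq_mul, smul_zero, add_zero]
      rw [hsum]
      rcases Nat.eq_zero_or_pos T.card with h0 | hpos
      · rw [h0]; simp
      · have hdc : ∀ j k, j ≤ k → k ∈ T → j ∈ T := by
          intro j k hjk hk
          rw [hT, Finset.mem_filter, Finset.mem_range] at hk ⊢
          refine ⟨lt_of_le_of_lt hjk hk.1, ?_⟩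
          have hk2 : ENNReal.ofReal σ < d k r := hk.2
          refine lt_of_lt_of_le hk2 (measure_mono fun u hu => ?_)
          simp only [Set.mem_setOf_eq] at hu ⊢
          have hjk' : ((j : ℝ) + 1) ≤ (k : ℝ) + 1 := by exact_mod_cast Nat.succ_le_succ hjk
          exact lt_of_le_of_lt (mul_le_mul_of_nonneg_right hjk' hr) hu
        have hmem : T.card - 1 ∈ T := mem_of_lt_card hdc (by omega)
        have hmem2 : ENNReal.ofReal σ < d (T.card - 1) r := by
          rw [hT, Finset.mem_filter] at hmem
          exact hmem.2
        have hge : ENNReal.ofReal ((((T.card - 1 : ℕ) : ℝ) + 1) * r) ≤ mu ν f σ :=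
          le_mu ν f hmem2
        have hcast : (((T.card - 1 : ℕ) : ℝ) + 1) = (T.card : ℝ) := by
          have : (T.card - 1) + 1 = T.card := Nat.succ_pred_eq_of_pos hpos
          exact_mod_cast congrArg (Nat.cast : ℕ → ℝ) this
        rw [hcast] at hge
        refine le_trans (le_of_eq ?_) hge
        rw [ENNReal.ofReal_mul (by positivity), ENNReal.ofReal_natCast]
    have hint : ENNReal.ofReal r * ENNReal.ofReal t ≤ I := by
      have h1 : ∫⁻ σ in Ioc (0:ℝ) t,
          (∑ k ∈ Finset.range N, (A k).indicator (fun _ => ENNReal.ofReal r) σ) ≤ I :=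
        lintegral_mono hpt
      refine le_trans ?_ h1
      rw [lintegral_finset_sum _ (fun k _ => measurable_const.indicator (hAm k))]
      have h2 : ∀ k, ENNReal.ofReal r * min (ENNReal.ofReal t) (d k r)
          ≤ ∫⁻ σ in Ioc (0:ℝ) t, (A k).indicator (fun _ => ENNReal.ofReal r) σ := by
        intro k
        rw [lintegral_indicator (hAm k), setLIntegral_const,
          Measure.restrict_apply (hAm k), Set.inter_comm]
        exact mul_le_mul_right (le_vol ht) _
      calc ENNReal.ofReal r * ENNReal.ofReal t
          = ENNReal.ofReal r * min (ENNReal.ofReal t) (∑ k ∈ Finset.range N, d k r) := by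
            rw [min_eq_left hN.le]
        _ ≤ ENNReal.ofReal r * ∑ k ∈ Finset.range N, min (ENNReal.ofReal t) (d k r) :=
            mul_le_mul_right (min_sum _ _ _) _
        _ = ∑ k ∈ Finset.range N, ENNReal.ofReal r * min (ENNReal.ofReal t) (d k r) :=
            Finset.mul_sum _ _ _
        _ ≤ _ := Finset.sum_le_sum fun k _ => h2 k
    exact absurd hint (not_le.mpr hIr)
  -- Assembly
  have hdFeq : ∀ s : ℝ,
      (ν.prod (Measure.count : Measure {k : ℕ // 0 < k}))
        {p : X × {k : ℕ // 0 < k} | s < |(fun p : X × {k : ℕ // 0 < k} =>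
          f p.1 / ((p.2 : ℕ) : ℝ)) p|} = ∑' k : ℕ, d k s := by
    intro s
    simpa using dF ν f hf s
  constructor
  · refine le_sInf ?_
    rintro x ⟨s, ⟨hs, hν⟩, rfl⟩
    rw [hdFeq s] at hν
    have hIle := claimL s hs hν
    have hdiv : I / ENNReal.ofReal t ≤ 2 * ENNReal.ofReal s := by
      rw [ENNReal.div_le_iff htne ofReal_ne_top]
      calc I ≤ 2 * ENNReal.ofReal s * ENNReal.ofReal t := hIle
        _ = 2 * ENNReal.ofReal s * ENNReal.ofReal t := rfl
    calc 2⁻¹ * (I / ENNReal.ofReal t) ≤ 2⁻¹ * (2 * ENNReal.ofReal s) :=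
          mul_le_mul_right hdiv _
      _ = ENNReal.ofReal s := by
          rw [← mul_assoc, ENNReal.inv_mul_cancel (by norm_num) (by norm_num), one_mul]
  · by_contra hcon
    push_neg at hcon
    obtain ⟨r, hr0, h1, h2⟩ := ENNReal.lt_iff_exists_real_btwn.mp hcon
    have hIr : I < ENNReal.ofReal r * ENNReal.ofReal t :=
      (ENNReal.div_lt_iff (Or.inl htne) (Or.inl ofReal_ne_top)).mp h1
    have hD := claimU r hr0 hIr
    have hle : mu (ν.prod (Measure.count : Measure {k : ℕ // 0 < k}))
        (fun p : X × {k : ℕ // 0 < k} => f p.1 / ((p.2 : ℕ) : ℝ)) t ≤ ENNReal.ofReal r := by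
      refine mu_le _ _ hr0 ?_
      rw [hdFeq r]
      exact hD
    exact absurd (lt_of_lt_of_le h2 hle) (lt_irrefl _)
end

section
/- Let Φ be an Orlicz function. Then for every measurable function x : (0,∞) → ℝ, ‖Cx‖_{Φ,∞} ≤ 2 ‖x‖_Φ, where (Cx)(t) = (1/t) ∫_0^t x(s) ds; that is, the Cesàro operator C maps the Orlicz space L_Φ(0,∞) boundedly into the weak Orlicz space L_{Φ,∞}(0,∞) with norm at most 2. -/
open MeasureTheory ENNReal Set

/-- An Orlicz function: continuous, convex and increasing on `[0,∞)`, with `Φ(0) = 0` and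
`Φ(t) → ∞` as `t → ∞`. -/
def IsOrliczFunction (Φ : ℝ → ℝ) : Prop :=
  Continuous Φ ∧ ConvexOn ℝ (Ici 0) Φ ∧ MonotoneOn Φ (Ici 0) ∧ Φ 0 = 0 ∧
    Filter.Tendsto Φ Filter.atTop Filter.atTop

/-- The Luxemburg norm `‖x‖_Φ = inf {λ > 0 : ∫_0^∞ Φ(|x(s)|/λ) ds ≤ 1}` on `(0,∞)`,
with `inf ∅ = ∞`. -/
noncomputable def orliczNorm (Φ : ℝ → ℝ) (x : ℝ → ℝ) : ℝ≥0∞ :=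
  sInf (ENNReal.ofReal ''
    {l : ℝ | 0 < l ∧ (∫⁻ s in Ioi (0:ℝ), ENNReal.ofReal (Φ (|x s| / l))) ≤ 1})

/-- The weak Orlicz quasi-norm
`‖x‖_{Φ,∞} = inf {c > 0 : ∀ λ > 0, Φ(λ) |{s ∈ (0,∞) : |x(s)| > cλ}| ≤ 1}`, with `inf ∅ = ∞`. -/
noncomputable def weakOrliczNorm (Φ : ℝ → ℝ) (x : ℝ → ℝ) : ℝ≥0∞ :=
  sInf (ENNReal.ofReal ''
    {c : ℝ | 0 < c ∧ ∀ l : ℝ, 0 < l →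
      ENNReal.ofReal (Φ l) * volume {s : ℝ | s ∈ Ioi 0 ∧ c * l < |x s|} ≤ 1})

/-- For every Orlicz function `Φ` and every measurable `x : (0,∞) → ℝ`,
`‖Cx‖_{Φ,∞} ≤ 2 ‖x‖_Φ`, where `(Cx)(t) = (1/t) ∫_0^t x(s) ds`. -/
theorem stmt_16 (Φ : ℝ → ℝ) (hΦ : IsOrliczFunction Φ) (x : ℝ → ℝ) (hx : Measurable x) :
    weakOrliczNorm Φ (fun t => (∫ s in Ioc (0:ℝ) t, x s) / t) ≤ 2 * orliczNorm Φ x := by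
  obtain ⟨hc, hconv, hmono, h0, -⟩ := hΦ
  have hΦ0 : ∀ a : ℝ, 0 ≤ a → 0 ≤ Φ a := fun a ha => by
    have := hmono (le_refl (0:ℝ)) ha ha
    rwa [h0] at this
  have key : ∀ l : ℝ, 0 < l → (∫⁻ s in Ioi (0:ℝ), ENNReal.ofReal (Φ (|x s| / l))) ≤ 1 →
      weakOrliczNorm Φ (fun t => (∫ s in Ioc (0:ℝ) t, x s) / t) ≤ ENNReal.ofReal (2 * l) := by
    intro l hl hint
    apply sInf_le
    refine ⟨2 * l, ⟨by positivity, ?_⟩, rfl⟩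
    intro lam hlam
    by_cases hΦ2 : Φ (2 * lam) ≤ 0
    · have hlam2 : Φ lam ≤ 0 :=
        le_trans (hmono hlam.le (by positivity : (0:ℝ) ≤ 2 * lam) (by linarith)) hΦ2
      simp [ENNReal.ofReal_eq_zero.mpr hlam2]
    push_neg at hΦ2
    have subs : {s : ℝ | s ∈ Ioi 0 ∧ 2 * l * lam < |(fun t => (∫ s in Ioc (0:ℝ) t, x s) / t) s|}
        ⊆ Ioc 0 (1 / Φ (2 * lam)) := by
      rintro t ⟨ht, hbig⟩
      simp only [mem_setOf_eq] at hbig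
      have ht0 : (0:ℝ) < t := ht
      refine ⟨ht0, ?_⟩
      -- integrability of x on `Ioc 0 t`
      have hxi : IntegrableOn x (Ioc 0 t) := by
        by_contra h
        rw [integral_undef h, zero_div, abs_zero] at hbig
        nlinarith
      set μ : Measure ℝ := volume.restrict (Ioc 0 t) with hμ
      have hμuniv : μ univ = ENNReal.ofReal t := by
        rw [hμ, Measure.restrict_apply_univ, Real.volume_Ioc, sub_zero]
      haveI : IsFiniteMeasure μ := ⟨by rw [hμuniv]; exact ofReal_lt_top⟩
      haveI : NeZero μ := ⟨by
        intro h
        rw [h] at hμuniv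
        simp only [Measure.coe_zero, Pi.zero_apply] at hμuniv
        exact (ENNReal.ofReal_pos.mpr ht0).ne' hμuniv.symm⟩
      -- integrability of `Φ (|x ·| / l)` on `Ioc 0 t`
      have hgm : Measurable fun s => Φ (|x s| / l) :=
        hc.measurable.comp ((hx.abs).div_const l)
      have hgnn : ∀ s, 0 ≤ Φ (|x s| / l) := fun s => hΦ0 _ (by positivity)
      have hlint : (∫⁻ s, ENNReal.ofReal (Φ (|x s| / l)) ∂μ) ≤ 1 := by
        refine le_trans ?_ hint
        exact lintegral_mono_set (fun s hs => hs.1)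
      have hgi : Integrable (fun s => Φ (|x s| / l)) μ := by
        refine ⟨hgm.aestronglyMeasurable, ?_⟩
        rw [hasFiniteIntegral_iff_norm]
        calc (∫⁻ s, ENNReal.ofReal ‖Φ (|x s| / l)‖ ∂μ)
            = ∫⁻ s, ENNReal.ofReal (Φ (|x s| / l)) ∂μ := by
              congr 1; ext s; rw [Real.norm_of_nonneg (hgnn s)]
          _ ≤ 1 := hlint
          _ < ⊤ := one_lt_top
      have hfi : Integrable (fun s => |x s| / l) μ := hxi.abs.div_const l
      -- real integral bound
      have hreal : (∫ s, Φ (|x s| / l) ∂μ) ≤ 1 := by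
        rw [integral_eq_lintegral_of_nonneg_ae (Filter.Eventually.of_forall hgnn)
          hgm.aestronglyMeasurable]
        calc (∫⁻ s, ENNReal.ofReal (Φ (|x s| / l)) ∂μ).toReal
            ≤ (1 : ℝ≥0∞).toReal := ENNReal.toReal_mono one_ne_top hlint
          _ = 1 := by simp
      -- Jensen
      have hjen : Φ (⨍ s, |x s| / l ∂μ) ≤ ⨍ s, Φ (|x s| / l) ∂μ :=
        hconv.map_average_le hc.continuousOn isClosed_Ici
          (Filter.Eventually.of_forall fun s => mem_Ici.mpr (by positivity)) hfi hgi
      have havg : ∀ f : ℝ → ℝ, (⨍ s, f s ∂μ) = t⁻¹ * ∫ s, f s ∂μ := by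
        intro f
        rw [average_eq, measureReal_def, hμuniv, ENNReal.toReal_ofReal ht0.le, smul_eq_mul]
      -- lower bound on the average of |x|/l
      have habs : |∫ s, x s ∂μ| ≤ ∫ s, |x s| ∂μ := by
        simpa [Real.norm_eq_abs] using norm_integral_le_integral_norm (μ := μ) x
      have hbig' : 2 * lam ≤ ⨍ s, |x s| / l ∂μ := by
        rw [abs_div, abs_of_pos ht0, lt_div_iff₀ ht0] at hbig
        rw [havg, integral_div, inv_mul_eq_div, div_div,
          le_div_iff₀ (by positivity : (0:ℝ) < l * t)]
        nlinarith [hbig, habs]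
    -- chain: Φ (2 lam) ≤ 1 / t hence t ≤ 1 / Φ (2 lam)
      have hmain : Φ (2 * lam) ≤ t⁻¹ := by
        calc Φ (2 * lam) ≤ Φ (⨍ s, |x s| / l ∂μ) :=
              hmono (mem_Ici.mpr (by positivity)) (mem_Ici.mpr (le_trans (by positivity) hbig')) (by linarith)
          _ ≤ ⨍ s, Φ (|x s| / l) ∂μ := hjen
          _ = t⁻¹ * ∫ s, Φ (|x s| / l) ∂μ := havg _
          _ ≤ t⁻¹ * 1 := mul_le_mul_of_nonneg_left hreal (by positivity)
          _ = t⁻¹ := mul_one _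
      rw [le_div_iff₀ hΦ2]
      calc t * Φ (2 * lam) ≤ t * t⁻¹ := mul_le_mul_of_nonneg_left hmain ht0.le
        _ = 1 := mul_inv_cancel₀ ht0.ne'
    calc ENNReal.ofReal (Φ lam) *
          volume {s : ℝ | s ∈ Ioi 0 ∧ 2 * l * lam < |(fun t => (∫ s in Ioc (0:ℝ) t, x s) / t) s|}
        ≤ ENNReal.ofReal (Φ lam) * volume (Ioc 0 (1 / Φ (2 * lam))) :=
          mul_le_mul_right (measure_mono subs) _
      _ = ENNReal.ofReal (Φ lam) * ENNReal.ofReal (1 / Φ (2 * lam)) := by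
          rw [Real.volume_Ioc, sub_zero]
      _ = ENNReal.ofReal (Φ lam * (1 / Φ (2 * lam))) :=
          (ENNReal.ofReal_mul (hΦ0 lam hlam.le)).symm
      _ ≤ 1 := by
          rw [← ENNReal.ofReal_one]
          apply ENNReal.ofReal_le_ofReal
          rw [mul_one_div, div_le_one hΦ2]
          exact hmono (mem_Ici.mpr hlam.le) (mem_Ici.mpr (by positivity)) (by linarith)
  rw [orliczNorm, sInf_image]
  rw [ENNReal.mul_iInf_of_ne two_ne_zero ENNReal.ofNat_ne_top]
  refine le_iInf fun a => ?_
  rw [ENNReal.mul_iInf_of_ne two_ne_zero ENNReal.ofNat_ne_top]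
  refine le_iInf fun ha => ?_
  calc weakOrliczNorm Φ (fun t => (∫ s in Ioc (0:ℝ) t, x s) / t)
      ≤ ENNReal.ofReal (2 * a) := key a ha.1 ha.2
    _ = 2 * ENNReal.ofReal a := by
        rw [ENNReal.ofReal_mul (by norm_num : (0:ℝ) ≤ 2)]
        norm_num
end

section
/- Let 1 ≤ q < ∞ and let Φ be an Orlicz function that is q-concave, i.e. t ↦ Φ(t^{1/q}) is concave on [0,∞). Then there exists a constant C (depending only on Φ) such that for every measurable x : (0,∞) → ℝ, ‖C*x‖_Φ ≤ C ‖x‖_Φ, where (C*x)(t) = ∫_t^∞ x(s)/s ds; that is, the dual Cesàro operator C* is bounded on the Orlicz space L_Φ(0,∞). -/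
open MeasureTheory ENNReal Set

private lemma qconcave_key {q : ℝ} (hq0 : 0 < q) {Φ : ℝ → ℝ}
    (hconc : ConcaveOn ℝ (Ici 0) (fun t : ℝ => Φ (t ^ (1/q)))) (hΦ0 : Φ 0 = 0)
    {a u : ℝ} (ha : 0 ≤ a) (hu : 1 ≤ u) :
    Φ (a * u ^ (1/q)) ≤ u * Φ a := by
  have hu0 : 0 < u := one_pos.trans_le hu
  have h1 : (0:ℝ) ≤ 1/u := by positivity
  have h2 : (0:ℝ) ≤ 1 - 1/u := by
    have : 1/u ≤ 1 := by rw [div_le_one hu0]; exact hu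
    linarith
  have haq : (0:ℝ) ≤ a ^ q := Real.rpow_nonneg ha q
  have hx : u * a ^ q ∈ Ici (0:ℝ) := by
    have : (0:ℝ) ≤ u * a ^ q := by positivity
    exact this
  have hy : (0:ℝ) ∈ Ici (0:ℝ) := mem_Ici.mpr le_rfl
  have hsum : 1/u + (1 - 1/u) = 1 := by ring
  have H := hconc.2 hx hy h1 h2 hsum
  simp only [smul_eq_mul, mul_zero, add_zero] at H
  have e1 : 1/u * (u * a ^ q) = a ^ q := by field_simp
  have e3 : ((a:ℝ) ^ q) ^ (1/q) = a := by
    rw [← Real.rpow_mul ha, mul_one_div_cancel hq0.ne', Real.rpow_one]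
  have e2 : ((u * a ^ q : ℝ)) ^ (1/q) = u ^ (1/q) * a := by
    rw [Real.mul_rpow hu0.le haq, e3]
  have ez : ((0:ℝ)) ^ (1/q) = 0 := by
    rw [Real.zero_rpow]; positivity
  rw [e1, e3, ez, hΦ0, mul_zero, add_zero, e2] at H
  have := mul_le_mul_of_nonneg_left H hu0.le
  rw [← mul_assoc, mul_one_div_cancel hu0.ne', one_mul] at this
  rw [mul_comm a (u ^ (1/q))]
  exact this

private lemma lintegral_Ioi_comp_mul_left {h : ℝ → ℝ≥0∞} (mh : Measurable h) {c : ℝ} (hc : 0 < c) :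
    ∫⁻ t in Ioi (0:ℝ), h (c * t) = ENNReal.ofReal c⁻¹ * ∫⁻ s in Ioi (0:ℝ), h s := by
  have hpre : (fun t : ℝ => c * t) ⁻¹' (Ioi 0) = Ioi 0 := by
    rw [preimage_const_mul_Ioi₀ _ hc, zero_div]
  have hmg : Measurable fun t : ℝ => c * t := measurable_id.const_mul c
  calc ∫⁻ t in Ioi (0:ℝ), h (c*t)
      = ∫⁻ y in Ioi (0:ℝ), h y ∂(Measure.map (fun t => c*t) volume) := by
        rw [setLIntegral_map measurableSet_Ioi mh hmg, hpre]
    _ = ∫⁻ y in Ioi (0:ℝ), h y ∂(ENNReal.ofReal |c⁻¹| • volume) := by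
        rw [Real.map_volume_mul_left hc.ne']
    _ = ENNReal.ofReal c⁻¹ * ∫⁻ s in Ioi (0:ℝ), h s := by
        rw [Measure.restrict_smul, lintegral_smul_measure, abs_of_nonneg (inv_nonneg.2 hc.le), smul_eq_mul]


private lemma cov_t {x : ℝ → ℝ} {q t : ℝ} (hq0 : 0 < q) (ht : 0 < t) :
    (∫ s in Ioi t, x s / s) = q * ∫ v in Ioo (0:ℝ) 1, x (t * v ^ (-q)) * v⁻¹ ∧
    (IntegrableOn (fun s => x s / s) (Ioi t) ↔
      IntegrableOn (fun v => x (t * v ^ (-q)) * v⁻¹) (Ioo (0:ℝ) 1)) := by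
  set g : ℝ → ℝ := fun s => x s / s with hg
  set g1 : ℝ → ℝ := fun u => x (t * u) * u⁻¹ with hg1
  set y : ℝ → ℝ := fun v => x (t * v ^ (-q)) * v⁻¹ with hy
  have hgt : ∀ u : ℝ, g (t * u) = t⁻¹ * g1 u := by
    intro u
    simp only [hg, hg1, div_eq_mul_inv, mul_inv]
    ring
  -- Step 1 (integral): ∫ s in Ioi t, g s = ∫ u in Ioi 1, g1 u
  have step1 : (∫ s in Ioi t, g s) = ∫ u in Ioi 1, g1 u := by
    have h1 := MeasureTheory.integral_comp_mul_left_Ioi g 1 ht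
    rw [mul_one] at h1
    have h2 : (∫ u in Ioi (1:ℝ), g (t * u)) = t⁻¹ * ∫ u in Ioi (1:ℝ), g1 u := by
      simp_rw [hgt]
      exact integral_const_mul _ _
    rw [h2, smul_eq_mul] at h1
    have := congrArg (fun z => t * z) h1
    simp only [← mul_assoc, mul_inv_cancel₀ ht.ne', one_mul] at this
    linarith [this]
  -- Step 1 (integrability)
  have step1' : IntegrableOn g (Ioi t) ↔ IntegrableOn g1 (Ioi 1) := by
    have h1 := MeasureTheory.integrableOn_Ioi_comp_mul_left_iff g 1 ht
    rw [mul_one] at h1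
    rw [← h1]
    have : (fun u => g (t * u)) = fun u => t⁻¹ * g1 u := funext hgt
    rw [this]
    constructor
    · intro h
      have := h.const_mul t
      exact (by simpa [← mul_assoc, mul_inv_cancel₀ ht.ne'] using this : Integrable (fun x => g1 x) (volume.restrict (Ioi 1)))
    · intro h
      exact h.const_mul t⁻¹
  -- Step 2:  u = v ^ (-q)
  set f : ℝ → ℝ := (Ioi (1:ℝ)).indicator g1 with hf
  have hnq : (-q) ≠ 0 := neg_ne_zero.mpr hq0.ne'
  have habs : |(-q)| = q := by rw [abs_neg, abs_of_pos hq0]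
  -- pointwise identification on Ioi 0
  have hpt : ∀ v ∈ Ioi (0:ℝ),
      (|(-q)| * v ^ ((-q) - 1)) • f (v ^ (-q)) = (Ioo (0:ℝ) 1).indicator (fun v => q * y v) v := by
    intro v hv
    have hv0 : (0:ℝ) < v := hv
    by_cases hv1 : v < 1
    · have hgt1 : 1 < v ^ (-q) := by
        rw [Real.one_lt_rpow_iff_of_pos hv0]
        exact Or.inr ⟨hv1, neg_neg_iff_pos.mpr hq0⟩
      rw [hf, indicator_of_mem (mem_Ioi.mpr hgt1), indicator_of_mem (mem_Ioo.mpr ⟨hv0, hv1⟩)]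
      have hinv : (v ^ (-q) : ℝ)⁻¹ = v ^ q := by
        rw [Real.rpow_neg hv0.le, inv_inv]
      have hmul : v ^ ((-q) - 1) * v ^ q = v⁻¹ := by
        rw [← Real.rpow_add hv0, ← Real.rpow_neg_one v]
        ring_nf
      simp only [hg1, hy, smul_eq_mul, habs, hinv]
      calc q * v ^ (-q - 1) * (x (t * v ^ (-q)) * v ^ q)
          = q * (x (t * v ^ (-q)) * (v ^ (-q - 1) * v ^ q)) := by ring
        _ = q * (x (t * v ^ (-q)) * v⁻¹) := by rw [hmul]
    · have hle : v ^ (-q) ≤ 1 := by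
        apply Real.rpow_le_one_of_one_le_of_nonpos (not_lt.mp hv1)
        exact neg_nonpos.mpr hq0.le
      rw [hf, indicator_of_notMem (by simpa using hle),
        indicator_of_notMem (fun h => hv1 h.2), smul_zero]
  have hIoiInter : Ioi (1:ℝ) ∩ Ioi 0 = Ioi 1 :=
    inter_eq_left.mpr (fun u hu => show (0:ℝ) < u from lt_trans one_pos hu)
  have hIooInter : Ioo (0:ℝ) 1 ∩ Ioi 0 = Ioo 0 1 :=
    inter_eq_left.mpr Ioo_subset_Ioi_self
  have hmulIff : IntegrableOn (fun v => q * y v) (Ioo (0:ℝ) 1) ↔ IntegrableOn y (Ioo (0:ℝ) 1) := by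
    constructor
    · intro h
      have := h.const_mul q⁻¹
      exact (by simpa [← mul_assoc, inv_mul_cancel₀ hq0.ne'] using this : Integrable (fun x => y x) (volume.restrict (Ioo 0 1)))
    · intro h
      exact h.const_mul q
  refine ⟨?_, ?_⟩
  · -- integral equality
    have h3 := MeasureTheory.integral_comp_rpow_Ioi f hnq
    have hRHS : (∫ u in Ioi (0:ℝ), f u) = ∫ u in Ioi (1:ℝ), g1 u := by
      rw [hf, setIntegral_indicator measurableSet_Ioi]
      congr 1
      rw [Ioi_inter_Ioi]
      norm_num
    have hLHS : (∫ v in Ioi (0:ℝ), (|(-q)| * v ^ ((-q) - 1)) • f (v ^ (-q)))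
        = q * ∫ v in Ioo (0:ℝ) 1, y v := by
      rw [setIntegral_congr_fun measurableSet_Ioi hpt,
        setIntegral_indicator measurableSet_Ioo,
        inter_eq_right.mpr Ioo_subset_Ioi_self]
      exact integral_const_mul q y
    rw [step1, ← hRHS, ← h3, hLHS]
  · -- integrability equivalence
    rw [step1']
    have h4 := MeasureTheory.integrableOn_Ioi_comp_rpow_iff f hnq
    have hR : IntegrableOn f (Ioi (0:ℝ)) ↔ IntegrableOn g1 (Ioi 1) := by
      rw [hf, IntegrableOn, integrable_indicator_iff measurableSet_Ioi, IntegrableOn,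
        Measure.restrict_restrict measurableSet_Ioi, hIoiInter]
      exact Iff.rfl
    have hL : IntegrableOn (fun v => (|(-q)| * v ^ ((-q) - 1)) • f (v ^ (-q))) (Ioi (0:ℝ))
        ↔ IntegrableOn y (Ioo (0:ℝ) 1) := by
      rw [integrableOn_congr_fun hpt measurableSet_Ioi, IntegrableOn,
        integrable_indicator_iff measurableSet_Ioo, IntegrableOn,
        Measure.restrict_restrict measurableSet_Ioo, hIooInter]
      exact hmulIff
    rw [← hR, ← h4, hL]

private lemma main_bound {q : ℝ} (hq : 1 ≤ q) {Φ : ℝ → ℝ} (hΦ : IsOrliczFunction Φ)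
    (hconc : ConcaveOn ℝ (Ici 0) (fun t : ℝ => Φ (t ^ (1/q))))
    {x : ℝ → ℝ} (hx : Measurable x) {l : ℝ} (hl : 0 < l)
    (hI : (∫⁻ s in Ioi (0:ℝ), ENNReal.ofReal (Φ (|x s| / l))) ≤ 1) :
    (∫⁻ t in Ioi (0:ℝ), ENNReal.ofReal (Φ (|∫ s in Ioi t, x s / s| / (q * l)))) ≤ 1 := by
  obtain ⟨hcont, hconv, hmono, hΦ0, -⟩ := hΦ
  have hq0 : (0:ℝ) < q := lt_of_lt_of_le one_pos hq
  have hΦnn : ∀ {a : ℝ}, 0 ≤ a → 0 ≤ Φ a := by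
    intro a ha
    have := hmono (mem_Ici.mpr le_rfl) (mem_Ici.mpr ha) ha
    rwa [hΦ0] at this
  set F : ℝ → ℝ → ℝ≥0∞ :=
    fun t v => ENNReal.ofReal (v ^ (-q) * Φ (|x (t * v ^ (-q))| / l)) with hF
  set R : ℝ → ℝ≥0∞ := fun t => ∫⁻ v in Ioo (0:ℝ) 1, F t v with hR
  have hmrq : Measurable fun v : ℝ => v ^ (-q) := measurable_id.pow_const (-q)
  have hmF : Measurable (Function.uncurry F) := by
    apply ENNReal.measurable_ofReal.comp
    have m1 : Measurable fun p : ℝ × ℝ => p.2 ^ (-q) := measurable_snd.pow_const (-q)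
    exact m1.mul
      (hcont.measurable.comp (((hx.comp (measurable_fst.mul m1)).abs).div_const l))
  have hh : Measurable fun s : ℝ => ENNReal.ofReal (Φ (|x s| / l)) :=
    ENNReal.measurable_ofReal.comp (hcont.measurable.comp (hx.abs.div_const l))
  -- total bound
  have hTotal : (∫⁻ t in Ioi (0:ℝ), R t) ≤ 1 := by
    have hswap : (∫⁻ t in Ioi (0:ℝ), R t)
        = ∫⁻ v in Ioo (0:ℝ) 1, ∫⁻ t in Ioi (0:ℝ), F t v := by
      exact lintegral_lintegral_swap hmF.aemeasurable
    rw [hswap]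
    have hinner : ∀ v ∈ Ioo (0:ℝ) 1,
        (∫⁻ t in Ioi (0:ℝ), F t v) = ∫⁻ s in Ioi (0:ℝ), ENNReal.ofReal (Φ (|x s| / l)) := by
      intro v hv
      have hv0 : (0:ℝ) < v := hv.1
      have hcpos : (0:ℝ) < v ^ (-q) := Real.rpow_pos_of_pos hv0 _
      have e : ∀ t : ℝ, F t v
          = ENNReal.ofReal (v ^ (-q)) * ENNReal.ofReal (Φ (|x (v ^ (-q) * t)| / l)) := by
        intro t
        show ENNReal.ofReal (v ^ (-q) * Φ (|x (t * v ^ (-q))| / l)) = _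
        rw [ENNReal.ofReal_mul hcpos.le, mul_comm t (v ^ (-q))]
      simp only [e]
      rw [lintegral_const_mul' _ _ ENNReal.ofReal_ne_top,
        lintegral_Ioi_comp_mul_left hh hcpos,
        ← mul_assoc, ← ENNReal.ofReal_mul hcpos.le, mul_inv_cancel₀ hcpos.ne',
        ENNReal.ofReal_one, one_mul]
    rw [setLIntegral_congr_fun measurableSet_Ioo hinner,
      setLIntegral_const, Real.volume_Ioo]
    simpa using hI
  -- pointwise bound
  have hPoint : ∀ t ∈ Ioi (0:ℝ),
      ENNReal.ofReal (Φ (|∫ s in Ioi t, x s / s| / (q * l))) ≤ R t := by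
    intro t ht
    obtain ⟨hEq, hIff⟩ := cov_t (x := x) hq0 (mem_Ioi.mp ht)
    set y : ℝ → ℝ := fun v => x (t * v ^ (-q)) * v⁻¹ with hy
    by_cases hyInt : IntegrableOn y (Ioo (0:ℝ) 1)
    · set μ01 := volume.restrict (Ioo (0:ℝ) 1) with hμ01
      haveI : IsProbabilityMeasure μ01 := by
        constructor
        rw [hμ01, Measure.restrict_apply_univ, Real.volume_Ioo]
        norm_num
      set z : ℝ → ℝ := fun v => |y v| / l with hz
      have hz_nonneg : ∀ v, 0 ≤ z v := fun v => div_nonneg (abs_nonneg _) hl.le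
      have hz_meas : Measurable z :=
        ((hx.comp (hmrq.const_mul t)).mul measurable_inv).abs.div_const l
      have hzInt : Integrable z μ01 := (hyInt.abs).div_const l
      -- pointwise comparison Φ(z v) ≤ F t v on (0,1)
      have hptw : ∀ v ∈ Ioo (0:ℝ) 1, ENNReal.ofReal (Φ (z v)) ≤ F t v := by
        intro v hv
        have hv0 : (0:ℝ) < v := hv.1
        have hu1 : 1 ≤ v ^ (-q) :=
          Real.one_le_rpow_of_pos_of_le_one_of_nonpos hv0 hv.2.le (neg_nonpos.mpr hq0.le)
        have hkey := qconcave_key hq0 hconc hΦ0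
          (a := |x (t * v ^ (-q))| / l) (div_nonneg (abs_nonneg _) hl.le) hu1
        have hpow : ((v ^ (-q) : ℝ)) ^ (1/q) = v⁻¹ := by
          rw [← Real.rpow_mul hv0.le]
          have hm : -q * (1/q) = -1 := by field_simp
          rw [hm, Real.rpow_neg_one]
        have hzv : z v = |x (t * v ^ (-q))| / l * (v ^ (-q)) ^ (1/q) := by
          rw [hz, hy, hpow]
          simp only [abs_mul, abs_of_pos (inv_pos.mpr hv0)]
          ring
        rw [hzv]
        exact ENNReal.ofReal_le_ofReal hkey
      by_cases hΦzInt : Integrable (fun v => Φ (z v)) μ01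
      · -- Jensen's inequality
        have hJ := hconv.map_integral_le hcont.continuousOn isClosed_Ici
          (Filter.Eventually.of_forall fun v => mem_Ici.mpr (hz_nonneg v)) hzInt hΦzInt
        have hzint_nn : 0 ≤ ∫ v, z v ∂μ01 := integral_nonneg hz_nonneg
        have habs : |∫ s in Ioi t, x s / s| / (q * l) ≤ ∫ v, z v ∂μ01 := by
          rw [hEq, abs_mul, abs_of_pos hq0]
          have h1 : |∫ v in Ioo (0:ℝ) 1, y v| ≤ ∫ v in Ioo (0:ℝ) 1, |y v| := by
            simpa [Real.norm_eq_abs] using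
              norm_integral_le_integral_norm (μ := μ01) y
          have h2 : (∫ v, z v ∂μ01) = (∫ v in Ioo (0:ℝ) 1, |y v|) / l := by
            rw [hz]
            exact integral_div l _
          rw [h2, div_le_div_iff₀ (by positivity) hl]
          calc q * |∫ v in Ioo (0:ℝ) 1, y v| * l ≤ q * (∫ v in Ioo (0:ℝ) 1, |y v|) * l := by
                have := mul_le_mul_of_nonneg_left h1 hq0.le
                nlinarith [hl]
            _ = (∫ v in Ioo (0:ℝ) 1, |y v|) * (q * l) := by ring
        have hmono' : Φ (|∫ s in Ioi t, x s / s| / (q * l)) ≤ Φ (∫ v, z v ∂μ01) :=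
          hmono (mem_Ici.mpr (by positivity)) (mem_Ici.mpr hzint_nn) habs
        calc ENNReal.ofReal (Φ (|∫ s in Ioi t, x s / s| / (q * l)))
            ≤ ENNReal.ofReal (Φ (∫ v, z v ∂μ01)) := ENNReal.ofReal_le_ofReal hmono'
          _ ≤ ENNReal.ofReal (∫ v, Φ (z v) ∂μ01) := ENNReal.ofReal_le_ofReal hJ
          _ = ∫⁻ v, ENNReal.ofReal (Φ (z v)) ∂μ01 :=
              ofReal_integral_eq_lintegral_ofReal hΦzInt
                (Filter.Eventually.of_forall fun v => hΦnn (hz_nonneg v))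
          _ ≤ R t := by
              rw [hR]
              exact lintegral_mono_ae
                ((ae_restrict_mem measurableSet_Ioo).mono fun v hv => hptw v hv)
      · -- non-integrable case: R t = ∞
        have hZm : Measurable fun v => Φ (z v) := hcont.measurable.comp hz_meas
        have htop : (∫⁻ v, ENNReal.ofReal (Φ (z v)) ∂μ01) = ⊤ := by
          by_contra hne
          apply hΦzInt
          refine ⟨hZm.aestronglyMeasurable, ?_⟩
          rw [hasFiniteIntegral_iff_ofReal
            (Filter.Eventually.of_forall fun v => hΦnn (hz_nonneg v))]
          exact lt_top_iff_ne_top.mpr hne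
        have : R t = ⊤ := by
          rw [hR, eq_top_iff, ← htop]
          exact lintegral_mono_ae
            ((ae_restrict_mem measurableSet_Ioo).mono fun v hv => hptw v hv)
        rw [this]
        exact le_top
    · -- the inner function is not integrable: the Bochner integral vanishes
      have h0' : (∫ v in Ioo (0:ℝ) 1, y v) = 0 := integral_undef hyInt
      rw [hEq, h0', mul_zero, abs_zero, zero_div, hΦ0, ENNReal.ofReal_zero]
      exact zero_le
  calc (∫⁻ t in Ioi (0:ℝ), ENNReal.ofReal (Φ (|∫ s in Ioi t, x s / s| / (q * l))))
      ≤ ∫⁻ t in Ioi (0:ℝ), R t :=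
        lintegral_mono_ae ((ae_restrict_mem measurableSet_Ioi).mono fun t ht => hPoint t ht)
    _ ≤ 1 := hTotal


/-- If `Φ` is a `q`-concave Orlicz function (`1 ≤ q < ∞`, i.e. `t ↦ Φ(t^{1/q})` is concave
on `[0,∞)`), then the dual Cesàro operator `(C*x)(t) = ∫_t^∞ x(s)/s ds` is bounded on
`L_Φ(0,∞)`: there is a constant `C` (depending only on `Φ`) with `‖C*x‖_Φ ≤ C ‖x‖_Φ`. -/
theorem stmt_18 (q : ℝ) (hq : 1 ≤ q) (Φ : ℝ → ℝ) (hΦ : IsOrliczFunction Φ)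
    (hconc : ConcaveOn ℝ (Ici 0) (fun t : ℝ => Φ (t ^ (1/q)))) :
    ∃ C : ℝ, 0 < C ∧ ∀ x : ℝ → ℝ, Measurable x →
      orliczNorm Φ (fun t => ∫ s in Ioi t, x s / s) ≤ ENNReal.ofReal C * orliczNorm Φ x := by
  have hq0 : (0:ℝ) < q := lt_of_lt_of_le one_pos hq
  refine ⟨q, hq0, fun x hx => ?_⟩
  have hqne : ENNReal.ofReal q ≠ 0 := by
    simp [ENNReal.ofReal_eq_zero, not_le, hq0]
  set S : Set ℝ :=
    {l : ℝ | 0 < l ∧ (∫⁻ s in Ioi (0:ℝ), ENNReal.ofReal (Φ (|x s| / l))) ≤ 1} with hS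
  have hkey : ∀ l ∈ S, orliczNorm Φ (fun t => ∫ s in Ioi t, x s / s)
      ≤ ENNReal.ofReal q * ENNReal.ofReal l := by
    rintro l ⟨hl, hIl⟩
    have hb := main_bound hq hΦ hconc hx hl hIl
    have hql : 0 < q * l := mul_pos hq0 hl
    have : orliczNorm Φ (fun t => ∫ s in Ioi t, x s / s) ≤ ENNReal.ofReal (q * l) :=
      sInf_le ⟨q * l, ⟨hql, hb⟩, rfl⟩
    rwa [ENNReal.ofReal_mul hq0.le] at this
  show _ ≤ ENNReal.ofReal q * sInf (ENNReal.ofReal '' S)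
  rcases eq_empty_or_nonempty (ENNReal.ofReal '' S) with hT | hT
  · rw [hT, sInf_empty, ENNReal.mul_top hqne]
    exact le_top
  · haveI : Nonempty (ENNReal.ofReal '' S) := hT.to_subtype
    rw [sInf_eq_iInf', ENNReal.mul_iInf_of_ne hqne ENNReal.ofReal_ne_top]
    refine le_iInf ?_
    rintro ⟨b, l, hlS, rfl⟩
    exact hkey l hlS
end
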